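/- arXiv:1304.7227 — 5 statements merged into one kernel-verified Lean document; each statement's English description precedes it below -/
import Mathlib

section
/- Let f be twice differentiable on an open interval containing [a,b] with f'' integrable, and suppose |f''|^q is convex on [a,b] for some q ≥ 1. Then |f((a+b)/2) − (1/(b−a))∫ₐᵇ f(x) dx| ≤ ((b−a)²/48)·(1/4)^{1/q}·{ (3|f''((a+b)/2)|^q + |f''(a)|^q)^{1/q} + (3|f''((a+b)/2)|^q + |f''(b)|^q)^{1/q} }·(1/4)^{−1/q}·(1/4)^{1/q}, i.e. |f((a+b)/2) − (1/(b−a))∫ₐᵇ f| ≤ ((b−a)²/48)·(1/4)^{1/q}·[(3|f''((a+b)/2)|^q + |f''(a)|^q)^{1/q} + (3|f''((a+b)/2)|^q + |f''(b)|^q)^{1/q}]. -/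
open MeasureTheory Set intervalIntegral

private lemma poly_int (L A B : ℝ) :
    ∫ u in (0:ℝ)..L, (A*u^2 + B*u^3) = A*L^3/3 + B*L^4/4 := by
  have h1 : IntervalIntegrable (fun u : ℝ => A*u^2) volume 0 L :=
    (by fun_prop : Continuous fun u : ℝ => A*u^2).intervalIntegrable 0 L
  have h2 : IntervalIntegrable (fun u : ℝ => B*u^3) volume 0 L :=
    (by fun_prop : Continuous fun u : ℝ => B*u^3).intervalIntegrable 0 L
  rw [intervalIntegral.integral_add h1 h2, intervalIntegral.integral_const_mul,
    intervalIntegral.integral_const_mul, integral_pow, integral_pow]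
  norm_num; ring

private lemma holder_aux (c d q C W : ℝ) (w g : ℝ → ℝ) (hcd : c ≤ d) (hq : 1 ≤ q)
    (hC0 : 0 ≤ C) (hW0 : 0 ≤ W)
    (hw : Continuous w) (hw0 : ∀ x ∈ Set.Ioc c d, 0 ≤ w x)
    (hwW : ∀ x ∈ Set.Ioc c d, w x ≤ W)
    (hgm : AEStronglyMeasurable g (volume.restrict (Set.Ioc c d)))
    (hgC : ∀ x ∈ Set.Ioc c d, |g x| ≤ C) :
    ∫ x in c..d, w x * |g x| ≤
      (∫ x in c..d, w x) ^ (1 - 1/q) * (∫ x in c..d, w x * |g x| ^ q) ^ (1/q) := by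
  have hq0 : (0:ℝ) < q := lt_of_lt_of_le one_pos hq
  rcases eq_or_lt_of_le hq with hq1 | hq1
  · -- q = 1
    rw [← hq1]
    norm_num
  · -- q > 1
    have hiq0 : (0:ℝ) < 1/q := by positivity
    have h1q : (0:ℝ) < 1 - 1/q := by
      rw [sub_pos, div_lt_one hq0]; exact hq1
    set p := q/(q-1) with hp
    have hpq : p.HolderConjugate q := (Real.HolderConjugate.conjExponent hq1).symm
    have hone : 1/p = 1 - 1/q := by
      have h := hpq.inv_add_inv_eq_one
      rw [one_div, one_div]
      linarith
    set μ := volume.restrict (Set.Ioc c d) with hμ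
    haveI : IsFiniteMeasure μ := ⟨by
      rw [hμ, Measure.restrict_apply_univ]; exact measure_Ioc_lt_top⟩
    have hae : ∀ᵐ x ∂μ, x ∈ Set.Ioc c d := ae_restrict_mem measurableSet_Ioc
    set F : ℝ → ℝ := fun x => w x ^ (1 - 1/q) with hF
    set G : ℝ → ℝ := fun x => w x ^ (1/q) * |g x| with hG
    have hFc : Continuous F := (Real.continuous_rpow_const h1q.le).comp hw
    have hGm : AEStronglyMeasurable G μ :=
      (((Real.continuous_rpow_const hiq0.le).comp hw).aestronglyMeasurable).mul
        (by simpa [Real.norm_eq_abs] using hgm.norm)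
    have hFnn : 0 ≤ᵐ[μ] F := by
      filter_upwards [hae] with x hx
      exact Real.rpow_nonneg (hw0 x hx) _
    have hGnn : 0 ≤ᵐ[μ] G := by
      filter_upwards [hae] with x hx
      exact mul_nonneg (Real.rpow_nonneg (hw0 x hx) _) (abs_nonneg _)
    have hFlp : MemLp F (ENNReal.ofReal p) μ := by
      refine MemLp.of_bound hFc.aestronglyMeasurable (W ^ (1 - 1/q)) ?_
      filter_upwards [hae] with x hx
      rw [Real.norm_eq_abs, abs_of_nonneg (Real.rpow_nonneg (hw0 x hx) _)]
      exact Real.rpow_le_rpow (hw0 x hx) (hwW x hx) h1q.le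
    have hGlp : MemLp G (ENNReal.ofReal q) μ := by
      refine MemLp.of_bound hGm (W ^ (1/q) * C) ?_
      filter_upwards [hae] with x hx
      rw [Real.norm_eq_abs, abs_of_nonneg (mul_nonneg (Real.rpow_nonneg (hw0 x hx) _) (abs_nonneg _))]
      exact mul_le_mul (Real.rpow_le_rpow (hw0 x hx) (hwW x hx) hiq0.le) (hgC x hx)
        (abs_nonneg _) (Real.rpow_nonneg hW0 _)
    have key := MeasureTheory.integral_mul_le_Lp_mul_Lq_of_nonneg hpq hFnn hGnn hFlp hGlp
    have e1 : ∫ x, F x * G x ∂μ = ∫ x, w x * |g x| ∂μ := by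
      refine integral_congr_ae ?_
      filter_upwards [hae] with x hx
      rcases (hw0 x hx).eq_or_lt with h0 | hpos
      · have hwx : w x = 0 := h0.symm
        show w x ^ (1 - 1/q) * (w x ^ (1/q) * |g x|) = w x * |g x|
        rw [hwx, Real.zero_rpow (ne_of_gt h1q), Real.zero_rpow (ne_of_gt hiq0)]
        ring
      · have : w x ^ (1 - 1/q) * w x ^ (1/q) = w x := by
          rw [← Real.rpow_add hpos]
          norm_num
        calc F x * G x = (w x ^ (1 - 1/q) * w x ^ (1/q)) * |g x| := by ring
          _ = w x * |g x| := by rw [this]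
    have e2 : ∫ x, F x ^ p ∂μ = ∫ x, w x ∂μ := by
      refine integral_congr_ae ?_
      filter_upwards [hae] with x hx
      have : (1 - 1/q) * p = 1 := by
        rw [← hone, one_div, inv_mul_cancel₀ (ne_of_gt hpq.pos)]
      rw [hF, ← Real.rpow_mul (hw0 x hx), this, Real.rpow_one]
    have e3 : ∫ x, G x ^ q ∂μ = ∫ x, w x * |g x| ^ q ∂μ := by
      refine integral_congr_ae ?_
      filter_upwards [hae] with x hx
      have h1 : (1/q) * q = 1 := by
        rw [one_div, inv_mul_cancel₀ (ne_of_gt hq0)]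
      rw [hG, Real.mul_rpow (Real.rpow_nonneg (hw0 x hx) _) (abs_nonneg _),
        ← Real.rpow_mul (hw0 x hx), h1, Real.rpow_one]
    rw [e1, e2, e3, hone] at key
    rw [intervalIntegral.integral_of_le hcd, intervalIntegral.integral_of_le hcd,
      intervalIntegral.integral_of_le hcd]
    exact key


set_option maxHeartbeats 1000000 in
theorem stmt_7 (f f' f'' : ℝ → ℝ) (a b q : ℝ) (hab : a < b) (hq : 1 ≤ q)
    (hf' : ∀ x ∈ Set.Icc a b, HasDerivAt f (f' x) x)
    (hf'' : ∀ x ∈ Set.Icc a b, HasDerivAt f' (f'' x) x)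
    (hint : IntervalIntegrable f'' MeasureTheory.volume a b)
    (hconv : ∀ x ∈ Set.Icc a b, ∀ y ∈ Set.Icc a b, ∀ t ∈ Set.Icc (0:ℝ) 1,
      |f'' (t * x + (1 - t) * y)| ^ q ≤ t * |f'' x| ^ q + (1 - t) * |f'' y| ^ q) :
    |f ((a + b) / 2) - (1 / (b - a)) * ∫ u in a..b, f u| ≤
      (b - a) ^ 2 / 48 * (1 / 4 : ℝ) ^ (1 / q) *
        ((3 * |f'' ((a + b) / 2)| ^ q + |f'' a| ^ q) ^ (1 / q)
          + (3 * |f'' ((a + b) / 2)| ^ q + |f'' b| ^ q) ^ (1 / q)) := by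
  have hba : (0:ℝ) < b - a := sub_pos.2 hab
  obtain ⟨m, hm⟩ : ∃ m : ℝ, m = (a + b) / 2 := ⟨_, rfl⟩
  obtain ⟨L, hL⟩ : ∃ L : ℝ, L = (b - a) / 2 := ⟨_, rfl⟩
  rw [show (a + b) / 2 = m from hm.symm]
  have hL0 : 0 < L := by rw [hL]; positivity
  have ham : a < m := by rw [hm]; linarith
  have hmb : m < b := by rw [hm]; linarith
  have hma : m - a = L := by rw [hm, hL]; ring
  have hbm : b - m = L := by rw [hm, hL]; ring
  have hq0 : (0:ℝ) < q := lt_of_lt_of_le one_pos hq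
  have haI : a ∈ Set.Icc a b := ⟨le_refl a, hab.le⟩
  have hbI : b ∈ Set.Icc a b := ⟨hab.le, le_refl b⟩
  have hmI : m ∈ Set.Icc a b := ⟨ham.le, hmb.le⟩
  obtain ⟨M, hM⟩ : ∃ M : ℝ, M = |f'' m| ^ q := ⟨_, rfl⟩
  obtain ⟨A', hA⟩ : ∃ A' : ℝ, A' = |f'' a| ^ q := ⟨_, rfl⟩
  obtain ⟨B', hB⟩ : ∃ B' : ℝ, B' = |f'' b| ^ q := ⟨_, rfl⟩
  rw [show |f'' m| ^ q = M from hM.symm, show |f'' a| ^ q = A' from hA.symm,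
    show |f'' b| ^ q = B' from hB.symm]
  have hM0 : 0 ≤ M := by rw [hM]; exact Real.rpow_nonneg (abs_nonneg _) _
  have hA0 : 0 ≤ A' := by rw [hA]; exact Real.rpow_nonneg (abs_nonneg _) _
  have hB0 : 0 ≤ B' := by rw [hB]; exact Real.rpow_nonneg (abs_nonneg _) _
  -- continuity
  have hf'c : ContinuousOn f' (Set.Icc a b) :=
    fun x hx => (hf'' x hx).continuousAt.continuousWithinAt
  have hfc : ContinuousOn f (Set.Icc a b) :=
    fun x hx => (hf' x hx).continuousAt.continuousWithinAt
  -- uniform bound on |f''|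
  obtain ⟨C, hC⟩ : ∃ C : ℝ, C = max |f'' a| |f'' b| := ⟨_, rfl⟩
  have hC0 : 0 ≤ C := by rw [hC]; exact le_max_of_le_left (abs_nonneg _)
  have hfC : ∀ x ∈ Set.Icc a b, |f'' x| ≤ C := by
    intro x hx
    have ht : (b-x)/(b-a) ∈ Set.Icc (0:ℝ) 1 :=
      ⟨div_nonneg (by linarith [hx.2]) hba.le, by rw [div_le_one hba]; linarith [hx.1]⟩
    have h := hconv a haI b hbI _ ht
    have hxx : (b-x)/(b-a) * a + (1-(b-x)/(b-a)) * b = x := by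
      field_simp
      ring
    rw [hxx] at h
    have h2 : |f'' x| ^ q ≤ C ^ q := by
      have e1 : |f'' a| ^ q ≤ C ^ q :=
        Real.rpow_le_rpow (abs_nonneg _) (by rw [hC]; exact le_max_left _ _) hq0.le
      have e2 : |f'' b| ^ q ≤ C ^ q :=
        Real.rpow_le_rpow (abs_nonneg _) (by rw [hC]; exact le_max_right _ _) hq0.le
      have ht1 : (0:ℝ) ≤ (b-x)/(b-a) := ht.1
      have ht2 : (b-x)/(b-a) ≤ 1 := ht.2
      nlinarith [h]
    have hinv : (|f'' x| ^ q) ^ (1/q) = |f'' x| := by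
      rw [← Real.rpow_mul (abs_nonneg _), mul_one_div, div_self hq0.ne', Real.rpow_one]
    have hinvC : (C ^ q) ^ (1/q) = C := by
      rw [← Real.rpow_mul hC0, mul_one_div, div_self hq0.ne', Real.rpow_one]
    rw [← hinv, ← hinvC]
    exact Real.rpow_le_rpow (Real.rpow_nonneg (abs_nonneg _) _) h2 (by positivity)
  -- measurability of f''
  have hderiv : ∀ x ∈ Set.Icc a b, deriv f' x = f'' x := fun x hx => (hf'' x hx).deriv
  have hmeas : ∀ c d : ℝ, Set.Ioc c d ⊆ Set.Icc a b →
      AEStronglyMeasurable f'' (volume.restrict (Set.Ioc c d)) := by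
    intro c d hsub
    refine ((measurable_deriv f').aestronglyMeasurable.restrict).congr ?_
    exact (ae_restrict_iff' measurableSet_Ioc).2
      (Filter.Eventually.of_forall fun x hx => hderiv x (hsub hx))
  have hdm1 : AEStronglyMeasurable f'' (volume.restrict (Set.Ioc a m)) :=
    hmeas a m (fun x hx => ⟨hx.1.le, hx.2.trans hmb.le⟩)
  have hdm2 : AEStronglyMeasurable f'' (volume.restrict (Set.Ioc m b)) :=
    hmeas m b (fun x hx => ⟨ham.le.trans hx.1.le, hx.2⟩)
  ---------------------------------------------------------------------------
  -- LEFT HALF : J₁ bound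
  ---------------------------------------------------------------------------
  have hJ1 : ∫ x in a..m, (x-a)^2 * |f'' x| ≤
      L^3/3 * ((1/4:ℝ)^(1/q) * (3*M + A')^(1/q)) := by
    have hb1 : ∀ x ∈ Set.Icc a m, |f'' x| ^ q ≤ ((m-x)/L)*A' + ((x-a)/L)*M := by
      intro x hx
      have ht : (m-x)/L ∈ Set.Icc (0:ℝ) 1 :=
        ⟨div_nonneg (by linarith [hx.2]) hL0.le, by
          rw [div_le_one hL0]; linarith [hx.1, hma]⟩
      have h := hconv a haI m hmI _ ht
      have hxx : (m-x)/L * a + (1-(m-x)/L) * m = x := by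
        have h : m = a + L := by rw [← hma]; ring
        rw [h]; field_simp [hL0.ne']; ring
      have h1t : 1 - (m-x)/L = (x-a)/L := by
        field_simp [hL0.ne']
        rw [← hma]; ring
      rw [hxx, h1t] at h
      rw [hA, hM]
      exact h
    have haesm : AEStronglyMeasurable (fun x => (x-a)^2 * |f'' x| ^ q)
        (volume.restrict (Set.Ioc a m)) := by
      refine ((by fun_prop : Continuous fun x : ℝ => (x-a)^2)).aestronglyMeasurable.restrict.mul ?_
      exact (Real.continuous_rpow_const hq0.le).comp_aestronglyMeasurable
        (by simpa [Real.norm_eq_abs] using hdm1.norm)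
    have hint1 : IntervalIntegrable (fun x => (x-a)^2 * |f'' x| ^ q) volume a m := by
      rw [intervalIntegrable_iff_integrableOn_Ioc_of_le ham.le]
      refine ⟨haesm, HasFiniteIntegral.restrict_of_bounded (C := (m-a)^2 * C^q)
        measure_Ioc_lt_top ?_⟩
      filter_upwards [ae_restrict_mem measurableSet_Ioc] with x hx
      rw [Real.norm_eq_abs,
        abs_of_nonneg (mul_nonneg (sq_nonneg _) (Real.rpow_nonneg (abs_nonneg _) _))]
      have h1 : (x-a)^2 ≤ (m-a)^2 :=
        pow_le_pow_left₀ (by linarith [hx.1]) (by linarith [hx.2]) 2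
      have h2 : |f'' x| ^ q ≤ C ^ q :=
        Real.rpow_le_rpow (abs_nonneg _) (hfC x ⟨hx.1.le, hx.2.trans hmb.le⟩) hq0.le
      exact mul_le_mul h1 h2 (Real.rpow_nonneg (abs_nonneg _) _) (sq_nonneg _)
    have hint2 : IntervalIntegrable (fun x => (x-a)^2 * (((m-x)/L)*A' + ((x-a)/L)*M))
        volume a m :=
      (by fun_prop :
        Continuous fun x : ℝ => (x-a)^2 * (((m-x)/L)*A' + ((x-a)/L)*M)).intervalIntegrable a m
    have hmom : ∫ x in a..m, (x-a)^2 * |f'' x| ^ q ≤ L^3/12 * (3*M + A') := by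
      have hmono := intervalIntegral.integral_mono_on ham.le hint1 hint2
        (fun x hx => mul_le_mul_of_nonneg_left (hb1 x hx) (sq_nonneg _))
      refine hmono.trans_eq ?_
      have hcongr : (fun x => (x-a)^2 * (((m-x)/L)*A' + ((x-a)/L)*M))
          = fun x => (fun u => A'*u^2 + ((M-A')/L)*u^3) (x - a) := by
        funext x
        have hmx : m - x = L - (x - a) := by rw [← hma]; ring
        rw [hmx]
        field_simp [hL0.ne']
        ring
      rw [hcongr, intervalIntegral.integral_comp_sub_right (fun u => A'*u^2 + ((M-A')/L)*u^3) a,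
        show a - a = (0:ℝ) by ring, hma, poly_int]
      field_simp [hL0.ne']
      ring
    have hw : ∫ x in a..m, (x-a)^2 = L^3/3 := by
      rw [intervalIntegral.integral_comp_sub_right (fun u => u^2) a, show a - a = (0:ℝ) by ring,
        hma, integral_pow]
      norm_num
    have hH := holder_aux a m q C ((m-a)^2) (fun x => (x-a)^2) f'' ham.le hq hC0 (sq_nonneg _)
      (by fun_prop) (fun x _ => sq_nonneg _)
      (fun x hx => pow_le_pow_left₀ (by linarith [hx.1]) (by linarith [hx.2]) 2) hdm1
      (fun x hx => hfC x ⟨hx.1.le, hx.2.trans hmb.le⟩)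
    rw [hw] at hH
    have hnn : (0:ℝ) ≤ ∫ x in a..m, (x-a)^2 * |f'' x| ^ q :=
      intervalIntegral.integral_nonneg ham.le
        (fun x _ => mul_nonneg (sq_nonneg _) (Real.rpow_nonneg (abs_nonneg _) _))
    have h3 : (0:ℝ) < L^3/3 := by positivity
    have hT0 : (0:ℝ) ≤ 3*M + A' := by linarith
    calc ∫ x in a..m, (x-a)^2 * |f'' x|
        ≤ (L^3/3)^(1-1/q) * (∫ x in a..m, (x-a)^2 * |f'' x| ^ q)^(1/q) := hH
      _ ≤ (L^3/3)^(1-1/q) * (L^3/12 * (3*M + A'))^(1/q) := by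
          refine mul_le_mul_of_nonneg_left ?_ (Real.rpow_nonneg h3.le _)
          exact Real.rpow_le_rpow hnn hmom (by positivity)
      _ = L^3/3 * ((1/4:ℝ)^(1/q) * (3*M + A')^(1/q)) := by
          rw [show L^3/12 * (3*M + A') = (L^3/3) * ((1/4) * (3*M + A')) by ring,
            Real.mul_rpow h3.le (by positivity), Real.mul_rpow (by norm_num) hT0,
            ← mul_assoc, ← mul_assoc, ← Real.rpow_add h3]
          norm_num
          ring
  ---------------------------------------------------------------------------
  -- RIGHT HALF : J₂ bound
  ---------------------------------------------------------------------------
  have hJ2 : ∫ x in m..b, (b-x)^2 * |f'' x| ≤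
      L^3/3 * ((1/4:ℝ)^(1/q) * (3*M + B')^(1/q)) := by
    have hb2 : ∀ x ∈ Set.Icc m b, |f'' x| ^ q ≤ ((b-x)/L)*M + ((x-m)/L)*B' := by
      intro x hx
      have ht : (b-x)/L ∈ Set.Icc (0:ℝ) 1 :=
        ⟨div_nonneg (by linarith [hx.2]) hL0.le, by
          rw [div_le_one hL0]; linarith [hx.1, hbm]⟩
      have h := hconv m hmI b hbI _ ht
      have hxx : (b-x)/L * m + (1-(b-x)/L) * b = x := by
        have h : b = m + L := by rw [← hbm]; ring
        rw [h]; field_simp [hL0.ne']; ring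
      have h1t : 1 - (b-x)/L = (x-m)/L := by
        field_simp [hL0.ne']
        rw [← hbm]; ring
      rw [hxx, h1t] at h
      rw [hM, hB]
      exact h
    have haesm : AEStronglyMeasurable (fun x => (b-x)^2 * |f'' x| ^ q)
        (volume.restrict (Set.Ioc m b)) := by
      refine ((by fun_prop : Continuous fun x : ℝ => (b-x)^2)).aestronglyMeasurable.restrict.mul ?_
      exact (Real.continuous_rpow_const hq0.le).comp_aestronglyMeasurable
        (by simpa [Real.norm_eq_abs] using hdm2.norm)
    have hint1 : IntervalIntegrable (fun x => (b-x)^2 * |f'' x| ^ q) volume m b := by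
      rw [intervalIntegrable_iff_integrableOn_Ioc_of_le hmb.le]
      refine ⟨haesm, HasFiniteIntegral.restrict_of_bounded (C := (b-m)^2 * C^q)
        measure_Ioc_lt_top ?_⟩
      filter_upwards [ae_restrict_mem measurableSet_Ioc] with x hx
      rw [Real.norm_eq_abs,
        abs_of_nonneg (mul_nonneg (sq_nonneg _) (Real.rpow_nonneg (abs_nonneg _) _))]
      have h1 : (b-x)^2 ≤ (b-m)^2 :=
        pow_le_pow_left₀ (by linarith [hx.2]) (by linarith [hx.1]) 2
      have h2 : |f'' x| ^ q ≤ C ^ q :=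
        Real.rpow_le_rpow (abs_nonneg _) (hfC x ⟨ham.le.trans hx.1.le, hx.2⟩) hq0.le
      exact mul_le_mul h1 h2 (Real.rpow_nonneg (abs_nonneg _) _) (sq_nonneg _)
    have hint2 : IntervalIntegrable (fun x => (b-x)^2 * (((b-x)/L)*M + ((x-m)/L)*B'))
        volume m b :=
      (by fun_prop :
        Continuous fun x : ℝ => (b-x)^2 * (((b-x)/L)*M + ((x-m)/L)*B')).intervalIntegrable m b
    have hmom : ∫ x in m..b, (b-x)^2 * |f'' x| ^ q ≤ L^3/12 * (3*M + B') := by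
      have hmono := intervalIntegral.integral_mono_on hmb.le hint1 hint2
        (fun x hx => mul_le_mul_of_nonneg_left (hb2 x hx) (sq_nonneg _))
      refine hmono.trans_eq ?_
      have hcongr : (fun x => (b-x)^2 * (((b-x)/L)*M + ((x-m)/L)*B'))
          = fun x => (fun u => B'*u^2 + ((M-B')/L)*u^3) (b - x) := by
        funext x
        have hxm : x - m = L - (b - x) := by rw [← hbm]; ring
        rw [hxm]
        field_simp [hL0.ne']
        ring
      rw [hcongr, intervalIntegral.integral_comp_sub_left (fun u => B'*u^2 + ((M-B')/L)*u^3) b,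
        show b - b = (0:ℝ) by ring, hbm, poly_int]
      field_simp [hL0.ne']
      ring
    have hw : ∫ x in m..b, (b-x)^2 = L^3/3 := by
      rw [intervalIntegral.integral_comp_sub_left (fun u => u^2) b, show b - b = (0:ℝ) by ring,
        hbm, integral_pow]
      norm_num
    have hH := holder_aux m b q C ((b-m)^2) (fun x => (b-x)^2) f'' hmb.le hq hC0 (sq_nonneg _)
      (by fun_prop) (fun x _ => sq_nonneg _)
      (fun x hx => pow_le_pow_left₀ (by linarith [hx.2]) (by linarith [hx.1]) 2) hdm2
      (fun x hx => hfC x ⟨ham.le.trans hx.1.le, hx.2⟩)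
    rw [hw] at hH
    have hnn : (0:ℝ) ≤ ∫ x in m..b, (b-x)^2 * |f'' x| ^ q :=
      intervalIntegral.integral_nonneg hmb.le
        (fun x _ => mul_nonneg (sq_nonneg _) (Real.rpow_nonneg (abs_nonneg _) _))
    have h3 : (0:ℝ) < L^3/3 := by positivity
    have hT0 : (0:ℝ) ≤ 3*M + B' := by linarith
    calc ∫ x in m..b, (b-x)^2 * |f'' x|
        ≤ (L^3/3)^(1-1/q) * (∫ x in m..b, (b-x)^2 * |f'' x| ^ q)^(1/q) := hH
      _ ≤ (L^3/3)^(1-1/q) * (L^3/12 * (3*M + B'))^(1/q) := by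
          refine mul_le_mul_of_nonneg_left ?_ (Real.rpow_nonneg h3.le _)
          exact Real.rpow_le_rpow hnn hmom (by positivity)
      _ = L^3/3 * ((1/4:ℝ)^(1/q) * (3*M + B')^(1/q)) := by
          rw [show L^3/12 * (3*M + B') = (L^3/3) * ((1/4) * (3*M + B')) by ring,
            Real.mul_rpow h3.le (by positivity), Real.mul_rpow (by norm_num) hT0,
            ← mul_assoc, ← mul_assoc, ← Real.rpow_add h3]
          norm_num
          ring
  ---------------------------------------------------------------------------
  -- Integration by parts identity
  ---------------------------------------------------------------------------
  have hsub1 : Set.uIcc a m ⊆ Set.Icc a b := by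
    rw [Set.uIcc_of_le ham.le]; exact Set.Icc_subset_Icc le_rfl hmb.le
  have hsub2 : Set.uIcc m b ⊆ Set.Icc a b := by
    rw [Set.uIcc_of_le hmb.le]; exact Set.Icc_subset_Icc ham.le le_rfl
  have hintf''1 : IntervalIntegrable f'' volume a m :=
    hint.mono_set (by rw [Set.uIcc_of_le ham.le, Set.uIcc_of_le hab.le]
                      exact Set.Icc_subset_Icc le_rfl hmb.le)
  have hintf''2 : IntervalIntegrable f'' volume m b :=
    hint.mono_set (by rw [Set.uIcc_of_le hmb.le, Set.uIcc_of_le hab.le]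
                      exact Set.Icc_subset_Icc ham.le le_rfl)
  have hf'int1 : IntervalIntegrable f' volume a m := (hf'c.mono hsub1).intervalIntegrable
  have hf'int2 : IntervalIntegrable f' volume m b := (hf'c.mono hsub2).intervalIntegrable
  have hfint1 : IntervalIntegrable f volume a m := (hfc.mono hsub1).intervalIntegrable
  have hfint2 : IntervalIntegrable f volume m b := (hfc.mono hsub2).intervalIntegrable
  have e1 : ∫ x in a..m, (x-a)^2 * f'' x
      = (m-a)^2 * f' m - (a-a)^2 * f' a - ∫ x in a..m, (2*(x-a)) * f' x := by
    refine intervalIntegral.integral_mul_deriv_eq_deriv_mul ?_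
      (fun x hx => hf'' x (hsub1 hx))
      ((by fun_prop : Continuous fun y : ℝ => 2*(y-a)).intervalIntegrable _ _) hintf''1
    intro x _
    simpa using ((hasDerivAt_id x).sub_const a).fun_pow 2
  have e2 : ∫ x in a..m, (2*(x-a)) * f' x
      = 2*(m-a) * f m - 2*(a-a) * f a - ∫ x in a..m, (2:ℝ) * f x := by
    refine intervalIntegral.integral_mul_deriv_eq_deriv_mul ?_
      (fun x hx => hf' x (hsub1 hx))
      (continuous_const.intervalIntegrable _ _) hf'int1
    intro x _
    simpa using ((hasDerivAt_id x).sub_const a).const_mul 2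
  have e3 : ∫ x in m..b, (b-x)^2 * f'' x
      = (b-b)^2 * f' b - (b-m)^2 * f' m - ∫ x in m..b, (-2*(b-x)) * f' x := by
    refine intervalIntegral.integral_mul_deriv_eq_deriv_mul ?_
      (fun x hx => hf'' x (hsub2 hx))
      ((by fun_prop : Continuous fun y : ℝ => -2*(b-y)).intervalIntegrable _ _) hintf''2
    intro x _
    have h := (((hasDerivAt_id x).const_sub b).fun_pow 2)
    convert h using 1 <;> norm_num [id_eq]
  have e4 : ∫ x in m..b, (-2*(b-x)) * f' x
      = (-2*(b-b)) * f b - (-2*(b-m)) * f m - ∫ x in m..b, (2:ℝ) * f x := by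
    refine intervalIntegral.integral_mul_deriv_eq_deriv_mul ?_
      (fun x hx => hf' x (hsub2 hx))
      (continuous_const.intervalIntegrable _ _) hf'int2
    intro x _
    have h := ((hasDerivAt_id x).const_sub b).const_mul (-2 : ℝ)
    convert h using 1 <;> norm_num [id_eq]
  have hsplit : (∫ x in a..m, f x) + ∫ x in m..b, f x = ∫ x in a..b, f x :=
    intervalIntegral.integral_add_adjacent_intervals hfint1 hfint2
  have h2a : ∫ x in a..m, (2:ℝ) * f x = 2 * ∫ x in a..m, f x :=
    intervalIntegral.integral_const_mul 2 f
  have h2b : ∫ x in m..b, (2:ℝ) * f x = 2 * ∫ x in m..b, f x :=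
    intervalIntegral.integral_const_mul 2 f
  have hfrac : (1/(b-a)) * (b-a) = 1 := one_div_mul_cancel hba.ne'
  have key0 : (2*(b-a)) * (f m - (1/(b-a)) * ∫ u in a..b, f u)
      = -((∫ x in a..m, (x-a)^2 * f'' x) + ∫ x in m..b, (b-x)^2 * f'' x) := by
    rw [e1, e2, h2a, e3, e4, h2b, ← hsplit]
    linear_combination (-2 * ((∫ x in a..m, f x) + ∫ x in m..b, f x)) * hfrac
      + (f' m * ((m-a) + L)) * hma - (f' m * ((b-m) + L)) * hbm
  have key : f m - (1/(b-a)) * ∫ u in a..b, f u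
      = -((∫ x in a..m, (x-a)^2 * f'' x) + ∫ x in m..b, (b-x)^2 * f'' x)/(2*(b-a)) := by
    rw [eq_div_iff (by positivity : (2*(b-a)) ≠ 0)]
    linear_combination key0
  ---------------------------------------------------------------------------
  -- Assembly
  ---------------------------------------------------------------------------
  have habs1 : |∫ x in a..m, (x-a)^2 * f'' x| ≤ ∫ x in a..m, (x-a)^2 * |f'' x| := by
    refine (intervalIntegral.abs_integral_le_integral_abs ham.le).trans_eq ?_
    refine intervalIntegral.integral_congr fun x _ => ?_
    rw [abs_mul, abs_of_nonneg (sq_nonneg _)]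
  have habs2 : |∫ x in m..b, (b-x)^2 * f'' x| ≤ ∫ x in m..b, (b-x)^2 * |f'' x| := by
    refine (intervalIntegral.abs_integral_le_integral_abs hmb.le).trans_eq ?_
    refine intervalIntegral.integral_congr fun x _ => ?_
    rw [abs_mul, abs_of_nonneg (sq_nonneg _)]
  have h2ba : (0:ℝ) < 2*(b-a) := by positivity
  calc |f m - (1/(b-a)) * ∫ u in a..b, f u|
      = |(∫ x in a..m, (x-a)^2 * f'' x) + ∫ x in m..b, (b-x)^2 * f'' x| / (2*(b-a)) := by
        rw [key, abs_div, abs_neg, abs_of_pos h2ba]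
    _ ≤ (|∫ x in a..m, (x-a)^2 * f'' x| + |∫ x in m..b, (b-x)^2 * f'' x|) / (2*(b-a)) := by
        gcongr
        exact abs_add_le _ _
    _ ≤ ((∫ x in a..m, (x-a)^2 * |f'' x|) + ∫ x in m..b, (b-x)^2 * |f'' x|) / (2*(b-a)) := by
        gcongr
    _ ≤ (L^3/3 * ((1/4:ℝ)^(1/q) * (3*M + A')^(1/q))
          + L^3/3 * ((1/4:ℝ)^(1/q) * (3*M + B')^(1/q))) / (2*(b-a)) := by
        gcongr
    _ = (b - a) ^ 2 / 48 * (1 / 4 : ℝ) ^ (1 / q) * ((3*M + A') ^ (1 / q) + (3*M + B') ^ (1 / q)) := by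
        rw [hL]
        field_simp
        ring
end

section
/- Let f be twice differentiable on an open interval containing [a,b] with |f''|^q convex for some q ≥ 1 (a < b). Then the midpoint-trapezoid bound holds: |(f(a)+f(b))/2 − (1/(b−a))∫ₐᵇ f(x) dx| ≤ ((b−a)²/16)·(2/3)^{1−1/q}·{ [(5/12)|f''((a+b)/2)|^q + (1/4)|f''(a)|^q]^{1/q} + [(5/12)|f''((a+b)/2)|^q + (1/4)|f''(b)|^q]^{1/q} }. -/
open MeasureTheory Set

section helpers

open MeasureTheory Set

lemma cubic_int_left (a' b' c1 c2 c3 : ℝ) :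
    ∫ x in a'..b', (2*c1*(x - a') + 3*c2*(x - a')^2 + 4*c3*(x - a')^3) =
      c1*(b' - a')^2 + c2*(b' - a')^3 + c3*(b' - a')^4 := by
  have h : ∀ x ∈ Set.uIcc a' b',
      HasDerivAt (fun y => c1*(y - a')^2 + c2*(y - a')^3 + c3*(y - a')^4)
        (2*c1*(x - a') + 3*c2*(x - a')^2 + 4*c3*(x - a')^3) x := by
    intro x _
    have h1 : HasDerivAt (fun y : ℝ => y - a') 1 x := (hasDerivAt_id x).sub_const a'
    have h2 := (((h1.pow 2).const_mul c1).add ((h1.pow 3).const_mul c2)).add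
      ((h1.pow 4).const_mul c3)
    exact h2.congr_deriv (by push_cast; ring)
  rw [intervalIntegral.integral_eq_sub_of_hasDerivAt h
    (by apply Continuous.intervalIntegrable; fun_prop)]
  ring

lemma cubic_int_right (a' b' c1 c2 c3 : ℝ) :
    ∫ x in a'..b', (2*c1*(b' - x) + 3*c2*(b' - x)^2 + 4*c3*(b' - x)^3) =
      c1*(b' - a')^2 + c2*(b' - a')^3 + c3*(b' - a')^4 := by
  have h : ∀ x ∈ Set.uIcc a' b',
      HasDerivAt (fun y => -(c1*(b' - y)^2 + c2*(b' - y)^3 + c3*(b' - y)^4))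
        (2*c1*(b' - x) + 3*c2*(b' - x)^2 + 4*c3*(b' - x)^3) x := by
    intro x _
    have h1 : HasDerivAt (fun y : ℝ => b' - y) (-1) x := by simpa [sub_eq_neg_add] using (hasDerivAt_id x).neg.add_const b'
    have h2 := ((((h1.pow 2).const_mul c1).add ((h1.pow 3).const_mul c2)).add
      ((h1.pow 4).const_mul c3)).neg
    exact h2.congr_deriv (by push_cast; ring)
  rw [intervalIntegral.integral_eq_sub_of_hasDerivAt h
    (by apply Continuous.intervalIntegrable; fun_prop)]
  ring

open MeasureTheory Set

lemma holder_weight {c d q : ℝ} (hcd : c ≤ d) (hq : 1 ≤ q) {w g : ℝ → ℝ}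
    (hw : Continuous w) (hwnn : ∀ x ∈ Set.Icc c d, 0 ≤ w x)
    (hg : AEStronglyMeasurable g (volume.restrict (Set.Ioc c d)))
    {Cw M : ℝ} (hCw : ∀ x ∈ Set.Icc c d, |w x| ≤ Cw) (hM : 0 ≤ M)
    (hMg : ∀ x ∈ Set.Icc c d, |g x| ≤ M) :
    ∫ x in c..d, w x * |g x| ≤
      (∫ x in c..d, w x) ^ (1 - 1/q) * (∫ x in c..d, w x * |g x| ^ q) ^ (1/q) := by
  rcases eq_or_lt_of_le hq with hq1 | hq1
  · subst hq1
    simp [Real.rpow_one]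
  -- q > 1 case
  set μ := volume.restrict (Set.Ioc c d) with hμ
  haveI : IsFiniteMeasure μ := by
    constructor
    rw [hμ, Measure.restrict_apply_univ, Real.volume_Ioc]
    exact ENNReal.ofReal_lt_top
  set p := Real.conjExponent q with hp
  have hpq : p.HolderConjugate q := (Real.HolderConjugate.conjExponent hq1).symm
  have hp1 : 1/p = 1 - 1/q := by
    have := hpq.inv_add_inv_eq_one
    rw [one_div, one_div]; linarith
  have hppos := hpq.pos
  have hqpos := hpq.symm.pos
  have hFcont : Continuous fun x => |w x| ^ (1/p) :=
    (hw.abs).rpow_const (fun x => Or.inr (by positivity))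
  have hWq : Continuous fun x => |w x| ^ (1/q) :=
    (hw.abs).rpow_const (fun x => Or.inr (by positivity))
  have hGm : AEStronglyMeasurable (fun x => |w x| ^ (1/q) * |g x|) μ :=
    hWq.aestronglyMeasurable.mul (by simpa [Real.norm_eq_abs] using hg.norm)
  have haein : ∀ᵐ x ∂μ, x ∈ Set.Ioc c d := ae_restrict_mem measurableSet_Ioc
  have hCw0 : 0 ≤ Cw := le_trans (abs_nonneg _) (hCw c ⟨le_refl c, hcd⟩)
  have hF : MemLp (fun x => |w x| ^ (1/p)) (ENNReal.ofReal p) μ := by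
    refine MemLp.of_bound hFcont.aestronglyMeasurable (Cw ^ (1/p)) ?_
    filter_upwards [haein] with x hx
    rw [Real.norm_eq_abs, abs_of_nonneg (Real.rpow_nonneg (abs_nonneg _) _)]
    exact Real.rpow_le_rpow (abs_nonneg _) (hCw x (Set.Ioc_subset_Icc_self hx)) (by positivity)
  have hG : MemLp (fun x => |w x| ^ (1/q) * |g x|) (ENNReal.ofReal q) μ := by
    refine MemLp.of_bound hGm (Cw ^ (1/q) * M) ?_
    filter_upwards [haein] with x hx
    rw [Real.norm_eq_abs, abs_of_nonneg (mul_nonneg (Real.rpow_nonneg (abs_nonneg _) _) (abs_nonneg _))]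
    exact mul_le_mul
      (Real.rpow_le_rpow (abs_nonneg _) (hCw x (Set.Ioc_subset_Icc_self hx)) (by positivity))
      (hMg x (Set.Ioc_subset_Icc_self hx)) (abs_nonneg _) (by positivity)
  have key := MeasureTheory.integral_mul_le_Lp_mul_Lq_of_nonneg hpq
    (μ := μ) (f := fun x => |w x| ^ (1/p)) (g := fun x => |w x| ^ (1/q) * |g x|)
    (Filter.Eventually.of_forall fun x => Real.rpow_nonneg (abs_nonneg _) _)
    (Filter.Eventually.of_forall fun x => mul_nonneg (Real.rpow_nonneg (abs_nonneg _) _) (abs_nonneg _))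
    hF hG
  have e1 : ∫ x, (|w x| ^ (1/p)) * (|w x| ^ (1/q) * |g x|) ∂μ = ∫ x in c..d, w x * |g x| := by
    rw [intervalIntegral.integral_of_le hcd]
    refine setIntegral_congr_fun measurableSet_Ioc (fun x hx => ?_)
    have hwx : 0 ≤ w x := hwnn x (Set.Ioc_subset_Icc_self hx)
    rw [← mul_assoc, ← Real.rpow_add' (abs_nonneg _) (by rw [hp1]; ring_nf; norm_num),
      hp1]
    have : (1 - 1/q) + 1/q = 1 := by ring
    rw [this, Real.rpow_one, abs_of_nonneg hwx]
  have e2 : ∫ x, (|w x| ^ (1/p)) ^ p ∂μ = ∫ x in c..d, w x := by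
    rw [intervalIntegral.integral_of_le hcd]
    refine setIntegral_congr_fun measurableSet_Ioc (fun x hx => ?_)
    rw [← Real.rpow_mul (abs_nonneg _), one_div, inv_mul_cancel₀ hppos.ne', Real.rpow_one,
      abs_of_nonneg (hwnn x (Set.Ioc_subset_Icc_self hx))]
  have e3 : ∫ x, (|w x| ^ (1/q) * |g x|) ^ q ∂μ = ∫ x in c..d, w x * |g x| ^ q := by
    rw [intervalIntegral.integral_of_le hcd]
    refine setIntegral_congr_fun measurableSet_Ioc (fun x hx => ?_)
    rw [Real.mul_rpow (Real.rpow_nonneg (abs_nonneg _) _) (abs_nonneg _),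
      ← Real.rpow_mul (abs_nonneg _), one_div, inv_mul_cancel₀ hqpos.ne', Real.rpow_one,
      abs_of_nonneg (hwnn x (Set.Ioc_subset_Icc_self hx))]
  rw [e1, e2, e3, hp1] at key
  exact key

lemma bdd_intervalIntegrable {c d : ℝ} (hcd : c ≤ d) {h : ℝ → ℝ}
    (hm : AEStronglyMeasurable h (volume.restrict (Set.Ioc c d)))
    {C : ℝ} (hb : ∀ x ∈ Set.Icc c d, |h x| ≤ C) :
    IntervalIntegrable h volume c d := by
  rw [intervalIntegrable_iff, Set.uIoc_of_le hcd]
  haveI : IsFiniteMeasure (volume.restrict (Set.Ioc c d)) :=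
    ⟨by rw [Measure.restrict_apply_univ, Real.volume_Ioc]; exact ENNReal.ofReal_lt_top⟩
  exact (integrable_const C).mono' hm (by
    filter_upwards [ae_restrict_mem measurableSet_Ioc] with x hx
    simpa [Real.norm_eq_abs] using hb x (Set.Ioc_subset_Icc_self hx))

end helpers

set_option maxHeartbeats 1000000 in
theorem stmt_8 (f f' f'' : ℝ → ℝ) (a b q : ℝ) (hab : a < b) (hq : 1 ≤ q)
    (hf' : ∀ x ∈ Set.Icc a b, HasDerivAt f (f' x) x)
    (hf'' : ∀ x ∈ Set.Icc a b, HasDerivAt f' (f'' x) x)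
    (hint : IntervalIntegrable f'' MeasureTheory.volume a b)
    (hconv : ∀ x ∈ Set.Icc a b, ∀ y ∈ Set.Icc a b, ∀ t ∈ Set.Icc (0:ℝ) 1,
      |f'' (t * x + (1 - t) * y)| ^ q ≤ t * |f'' x| ^ q + (1 - t) * |f'' y| ^ q) :
    |(f a + f b) / 2 - (1 / (b - a)) * ∫ u in a..b, f u| ≤
      (b - a) ^ 2 / 16 * (2 / 3 : ℝ) ^ (1 - 1 / q) *
        (((5 / 12) * |f'' ((a + b) / 2)| ^ q + (1 / 4) * |f'' a| ^ q) ^ (1 / q)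
          + ((5 / 12) * |f'' ((a + b) / 2)| ^ q + (1 / 4) * |f'' b| ^ q) ^ (1 / q)) := by
  have hab' : a ≤ b := hab.le
  have hH : (0:ℝ) < b - a := sub_pos.2 hab
  have hqpos : (0:ℝ) < q := lt_of_lt_of_le one_pos hq
  set m : ℝ := (a + b) / 2 with hm
  have ham : a ≤ m := by rw [hm]; linarith
  have hmb : m ≤ b := by rw [hm]; linarith
  have hmem : m ∈ Set.Icc a b := ⟨ham, hmb⟩
  have hf'c : ContinuousOn f' (Set.Icc a b) :=
    fun x hx => ((hf'' x hx).continuousAt).continuousWithinAt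
  have hfc : ContinuousOn f (Set.Icc a b) :=
    fun x hx => ((hf' x hx).continuousAt).continuousWithinAt
  set w : ℝ → ℝ := fun x => (x - a) * (b - x) with hwdef
  have hwcont : Continuous w := by rw [hwdef]; fun_prop
  have huIcc : Set.uIcc a b = Set.Icc a b := Set.uIcc_of_le hab'
  -- first integration by parts
  have hwderiv : ∀ x ∈ Set.uIcc a b, HasDerivAt w (a + b - 2 * x) x := by
    intro x _
    have hb' : HasDerivAt (fun y : ℝ => b - y) (-1) x := by
      simpa [sub_eq_neg_add] using (hasDerivAt_id x).neg.add_const b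
    have h1 := ((hasDerivAt_id x).sub_const a).mul hb'
    rw [hwdef]
    refine h1.congr_deriv ?_
    simp only [id_eq]
    ring
  have hIBP1 := intervalIntegral.integral_mul_deriv_eq_deriv_mul hwderiv
    (fun x hx => hf'' x (huIcc ▸ hx))
    (by apply Continuous.intervalIntegrable; fun_prop) hint
  -- second integration by parts
  have huder : ∀ x ∈ Set.uIcc a b, HasDerivAt (fun y : ℝ => a + b - 2 * y) (-2 : ℝ) x := by
    intro x _
    have h2 : HasDerivAt (fun y : ℝ => 2 * y) 2 x := by
      simpa using (hasDerivAt_id x).const_mul (2:ℝ)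
    exact ((hasDerivAt_const x (a + b)).sub h2).congr_deriv (by ring)
  have hIBP2 := intervalIntegral.integral_mul_deriv_eq_deriv_mul huder
    (fun x hx => hf' x (huIcc ▸ hx))
    (intervalIntegrable_const)
    ((by rw [huIcc]; exact hf'c : ContinuousOn f' (Set.uIcc a b)).intervalIntegrable)
  have hconst : ∫ x in a..b, (-2 : ℝ) * f x = (-2) * ∫ x in a..b, f x :=
    intervalIntegral.integral_const_mul _ _
  have hkey : ∫ x in a..b, w x * f'' x = (b - a) * (f a + f b) - 2 * ∫ x in a..b, f x := by
    rw [hIBP1, hIBP2, hconst, hwdef]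
    ring
  have hX : (f a + f b) / 2 - (1 / (b - a)) * ∫ u in a..b, f u
      = (∫ x in a..b, w x * f'' x) / (2 * (b - a)) := by
    rw [hkey]; field_simp
  rw [hX, abs_div, abs_of_pos (by linarith : (0:ℝ) < 2 * (b - a))]
  -- split the integral
  have hwf : IntervalIntegrable (fun x => w x * f'' x) volume a b :=
    hint.continuousOn_mul hwcont.continuousOn
  have hsubL : Set.uIcc a m ⊆ Set.uIcc a b := by
    rw [huIcc, Set.uIcc_of_le ham]; exact Set.Icc_subset_Icc le_rfl hmb
  have hsubR : Set.uIcc m b ⊆ Set.uIcc a b := by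
    rw [huIcc, Set.uIcc_of_le hmb]; exact Set.Icc_subset_Icc ham le_rfl
  have hsplit := intervalIntegral.integral_add_adjacent_intervals
    (hwf.mono_set hsubL) (hwf.mono_set hsubR)
  -- measurability of f'' on halves
  have hmeasab : AEStronglyMeasurable f'' (volume.restrict (Set.Ioc a b)) :=
    hint.1.aestronglyMeasurable
  have hmeasL : AEStronglyMeasurable f'' (volume.restrict (Set.Ioc a m)) :=
    hmeasab.mono_measure (Measure.restrict_mono (Set.Ioc_subset_Ioc le_rfl hmb) le_rfl)
  have hmeasR : AEStronglyMeasurable f'' (volume.restrict (Set.Ioc m b)) :=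
    hmeasab.mono_measure (Measure.restrict_mono (Set.Ioc_subset_Ioc ham le_rfl) le_rfl)
  -- global bound on |f''|
  set M : ℝ := max |f'' a| |f'' b| with hMdef
  have hM0 : 0 ≤ M := le_trans (abs_nonneg _) (le_max_left _ _)
  have hMq : ∀ x ∈ Set.Icc a b, |f'' x| ^ q ≤ M ^ q := by
    intro x hx
    set t : ℝ := (x - a) / (b - a) with htdef
    have ht0 : 0 ≤ t := div_nonneg (by linarith [hx.1]) hH.le
    have ht1 : t ≤ 1 := by rw [htdef, div_le_one hH]; linarith [hx.2]
    have hc := hconv b (Set.right_mem_Icc.2 hab') a (Set.left_mem_Icc.2 hab') t ⟨ht0, ht1⟩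
    have hxe : t * b + (1 - t) * a = x := by rw [htdef]; field_simp; ring
    rw [hxe] at hc
    have h1 : |f'' b| ^ q ≤ M ^ q :=
      Real.rpow_le_rpow (abs_nonneg _) (le_max_right _ _) hqpos.le
    have h2 : |f'' a| ^ q ≤ M ^ q :=
      Real.rpow_le_rpow (abs_nonneg _) (le_max_left _ _) hqpos.le
    nlinarith [Real.rpow_nonneg (abs_nonneg (f'' b)) q, Real.rpow_nonneg (abs_nonneg (f'' a)) q]
  have hMbd : ∀ x ∈ Set.Icc a b, |f'' x| ≤ M := by
    intro x hx
    by_contra hcon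
    push_neg at hcon
    exact absurd (hMq x hx) (not_le.2 (Real.rpow_lt_rpow hM0 hcon hqpos))
  -- bounds on w
  have hwnn : ∀ x ∈ Set.Icc a b, 0 ≤ w x := fun x hx => by
    rw [hwdef]; exact mul_nonneg (by linarith [hx.1]) (by linarith [hx.2])
  have hCw : ∀ x ∈ Set.Icc a b, |w x| ≤ (b - a) ^ 2 := by
    intro x hx
    rw [abs_of_nonneg (hwnn x hx)]
    show (x - a) * (b - x) ≤ (b - a) ^ 2
    nlinarith [hx.1, hx.2]
  -- abbreviations
  set A : ℝ := |f'' m| ^ q with hAdef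
  set Ba : ℝ := |f'' a| ^ q with hBadef
  set Bb : ℝ := |f'' b| ^ q with hBbdef
  have hA0 : 0 ≤ A := Real.rpow_nonneg (abs_nonneg _) _
  have hBa0 : 0 ≤ Ba := Real.rpow_nonneg (abs_nonneg _) _
  have hBb0 : 0 ≤ Bb := Real.rpow_nonneg (abs_nonneg _) _
  have hSa0 : (0:ℝ) ≤ 5 / 12 * A + 1 / 4 * Ba := by linarith
  have hSb0 : (0:ℝ) ≤ 5 / 12 * A + 1 / 4 * Bb := by linarith
  clear_value m w M A Ba Bb
  -- integral of w on each half
  have hwintL : (∫ x in a..m, w x) = (b - a) ^ 3 / 12 := by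
    have hfun : w = fun x => 2 * ((b - a) / 2) * (x - a) + 3 * (-1/3 : ℝ) * (x - a) ^ 2
        + 4 * (0:ℝ) * (x - a) ^ 3 := by
      funext x; rw [hwdef]; ring
    rw [hfun, cubic_int_left, hm]; ring
  have hwintR : (∫ x in m..b, w x) = (b - a) ^ 3 / 12 := by
    have hfun : w = fun x => 2 * ((b - a) / 2) * (b - x) + 3 * (-1/3 : ℝ) * (b - x) ^ 2
        + 4 * (0:ℝ) * (b - x) ^ 3 := by
      funext x; rw [hwdef]; ring
    rw [hfun, cubic_int_right, hm]; ring
  -- integrability of the weighted q-th power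
  have hintwq : ∀ (c d : ℝ), a ≤ c → c ≤ d → d ≤ b →
      AEStronglyMeasurable f'' (volume.restrict (Set.Ioc c d)) →
      IntervalIntegrable (fun x => w x * |f'' x| ^ q) volume c d := by
    intro c d hac hcd hdb hms
    have hg' : AEMeasurable f'' (volume.restrict (Set.Ioc c d)) := hms.aemeasurable
    refine bdd_intervalIntegrable hcd
      (hwcont.aestronglyMeasurable.mul (AEMeasurable.aestronglyMeasurable (by fun_prop)))
      (C := (b - a) ^ 2 * M ^ q) ?_
    intro x hx
    have hxab : x ∈ Set.Icc a b := ⟨le_trans hac hx.1, le_trans hx.2 hdb⟩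
    rw [abs_mul, abs_of_nonneg (Real.rpow_nonneg (abs_nonneg _) _)]
    exact mul_le_mul (hCw x hxab) (hMq x hxab) (Real.rpow_nonneg (abs_nonneg _) _) (by positivity)
  -- pointwise convexity bound and integral evaluation : LEFT HALF
  have hL2 : (∫ x in a..m, w x * |f'' x| ^ q) ≤ (b - a) ^ 3 / 8 * (5 / 12 * A + 1 / 4 * Ba) := by
    have hpoly : ∀ x ∈ Set.Icc a m, w x * |f'' x| ^ q ≤
        w x * (2 * (x - a) / (b - a) * A + (1 - 2 * (x - a) / (b - a)) * Ba) := by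
      intro x hx
      have hxab : x ∈ Set.Icc a b := ⟨hx.1, le_trans hx.2 hmb⟩
      have hxm : x ≤ m := hx.2
      rw [hm] at hxm
      set t : ℝ := 2 * (x - a) / (b - a) with htdef
      have ht0 : 0 ≤ t := div_nonneg (by linarith [hx.1]) hH.le
      have ht1 : t ≤ 1 := by rw [htdef, div_le_one hH]; linarith
      have hc := hconv m hmem a (Set.left_mem_Icc.2 hab') t ⟨ht0, ht1⟩
      have hxe : t * m + (1 - t) * a = x := by rw [htdef, hm]; field_simp; ring
      rw [hxe, ← hAdef, ← hBadef] at hc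
      exact mul_le_mul_of_nonneg_left hc (hwnn x hxab)
    have hint2 : IntervalIntegrable
        (fun x => w x * (2 * (x - a) / (b - a) * A + (1 - 2 * (x - a) / (b - a)) * Ba))
        volume a m := by
      apply Continuous.intervalIntegrable
      rw [hwdef]; fun_prop
    have hmono := intervalIntegral.integral_mono_on ham (hintwq a m le_rfl ham hmb hmeasL)
      hint2 hpoly
    refine le_trans hmono (le_of_eq ?_)
    have heq : (fun x => w x * (2 * (x - a) / (b - a) * A + (1 - 2 * (x - a) / (b - a)) * Ba))
        = fun x => 2 * (Ba * (b - a) / 2) * (x - a) + 3 * ((2 * (A - Ba) - Ba) / 3) * (x - a) ^ 2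
          + 4 * (-(A - Ba) / (2 * (b - a))) * (x - a) ^ 3 := by
      funext x; rw [hwdef]; field_simp [hH.ne']; ring
    rw [heq, cubic_int_left, hm]; field_simp [hH.ne']; ring
  -- RIGHT HALF
  have hR2 : (∫ x in m..b, w x * |f'' x| ^ q) ≤ (b - a) ^ 3 / 8 * (5 / 12 * A + 1 / 4 * Bb) := by
    have hpoly : ∀ x ∈ Set.Icc m b, w x * |f'' x| ^ q ≤
        w x * (2 * (b - x) / (b - a) * A + (1 - 2 * (b - x) / (b - a)) * Bb) := by
      intro x hx
      have hxab : x ∈ Set.Icc a b := ⟨le_trans ham hx.1, hx.2⟩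
      have hxm : m ≤ x := hx.1
      rw [hm] at hxm
      set t : ℝ := 2 * (b - x) / (b - a) with htdef
      have ht0 : 0 ≤ t := div_nonneg (by linarith [hx.2]) hH.le
      have ht1 : t ≤ 1 := by rw [htdef, div_le_one hH]; linarith
      have hc := hconv m hmem b (Set.right_mem_Icc.2 hab') t ⟨ht0, ht1⟩
      have hxe : t * m + (1 - t) * b = x := by rw [htdef, hm]; field_simp; ring
      rw [hxe, ← hAdef, ← hBbdef] at hc
      exact mul_le_mul_of_nonneg_left hc (hwnn x hxab)
    have hint2 : IntervalIntegrable
        (fun x => w x * (2 * (b - x) / (b - a) * A + (1 - 2 * (b - x) / (b - a)) * Bb))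
        volume m b := by
      apply Continuous.intervalIntegrable
      rw [hwdef]; fun_prop
    have hmono := intervalIntegral.integral_mono_on hmb (hintwq m b ham hmb le_rfl hmeasR)
      hint2 hpoly
    refine le_trans hmono (le_of_eq ?_)
    have heq : (fun x => w x * (2 * (b - x) / (b - a) * A + (1 - 2 * (b - x) / (b - a)) * Bb))
        = fun x => 2 * (Bb * (b - a) / 2) * (b - x) + 3 * ((2 * (A - Bb) - Bb) / 3) * (b - x) ^ 2
          + 4 * (-(A - Bb) / (2 * (b - a))) * (b - x) ^ 3 := by
      funext x; rw [hwdef]; field_simp [hH.ne']; ring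
    rw [heq, cubic_int_right, hm]; field_simp [hH.ne']; ring
  -- Hölder on each half
  have habs : ∀ (c d : ℝ), a ≤ c → c ≤ d → d ≤ b →
      |∫ x in c..d, w x * f'' x| ≤ ∫ x in c..d, w x * |f'' x| := by
    intro c d hac hcd hdb
    refine le_trans (intervalIntegral.abs_integral_le_integral_abs hcd) (le_of_eq ?_)
    apply intervalIntegral.integral_congr
    intro x hx
    rw [Set.uIcc_of_le hcd] at hx
    show |w x * f'' x| = w x * |f'' x|
    rw [abs_mul, abs_of_nonneg (hwnn x ⟨le_trans hac hx.1, le_trans hx.2 hdb⟩)]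
  have hwq_nonneg : ∀ (c d : ℝ), a ≤ c → c ≤ d → d ≤ b →
      (0:ℝ) ≤ ∫ x in c..d, w x * |f'' x| ^ q := by
    intro c d hac hcd hdb
    refine intervalIntegral.integral_nonneg hcd (fun u hu => ?_)
    exact mul_nonneg (hwnn u ⟨le_trans hac hu.1, le_trans hu.2 hdb⟩)
      (Real.rpow_nonneg (abs_nonneg _) _)
  have hboundL : |∫ x in a..m, w x * f'' x| ≤
      ((b - a) ^ 3 / 12) ^ (1 - 1/q) * ((b - a) ^ 3 / 8 * (5 / 12 * A + 1 / 4 * Ba)) ^ (1/q) := by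
    refine le_trans (habs a m le_rfl ham hmb) (le_trans
      (holder_weight ham hq hwcont (fun x hx => hwnn x ⟨hx.1, hx.2.trans hmb⟩) hmeasL
        (fun x hx => hCw x ⟨hx.1, hx.2.trans hmb⟩) hM0
        (fun x hx => hMbd x ⟨hx.1, hx.2.trans hmb⟩)) ?_)
    rw [hwintL]
    refine mul_le_mul_of_nonneg_left ?_ (Real.rpow_nonneg (by positivity) _)
    exact Real.rpow_le_rpow (hwq_nonneg a m le_rfl ham hmb) hL2 (by positivity)
  have hboundR : |∫ x in m..b, w x * f'' x| ≤
      ((b - a) ^ 3 / 12) ^ (1 - 1/q) * ((b - a) ^ 3 / 8 * (5 / 12 * A + 1 / 4 * Bb)) ^ (1/q) := by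
    refine le_trans (habs m b ham hmb le_rfl) (le_trans
      (holder_weight hmb hq hwcont (fun x hx => hwnn x ⟨ham.trans hx.1, hx.2⟩) hmeasR
        (fun x hx => hCw x ⟨ham.trans hx.1, hx.2⟩) hM0
        (fun x hx => hMbd x ⟨ham.trans hx.1, hx.2⟩)) ?_)
    rw [hwintR]
    refine mul_le_mul_of_nonneg_left ?_ (Real.rpow_nonneg (by positivity) _)
    exact Real.rpow_le_rpow (hwq_nonneg m b ham hmb le_rfl) hR2 (by positivity)
  -- combine
  have hsum : |∫ x in a..b, w x * f'' x| ≤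
      ((b - a) ^ 3 / 12) ^ (1 - 1/q) * ((b - a) ^ 3 / 8 * (5 / 12 * A + 1 / 4 * Ba)) ^ (1/q)
      + ((b - a) ^ 3 / 12) ^ (1 - 1/q) * ((b - a) ^ 3 / 8 * (5 / 12 * A + 1 / 4 * Bb)) ^ (1/q) := by
    rw [← hsplit]
    exact le_trans (abs_add_le _ _) (add_le_add hboundL hboundR)
  have h2H : (0:ℝ) < 2 * (b - a) := by linarith
  have h83 : (0:ℝ) < (b - a) ^ 3 / 8 := by positivity
  have hcomb : ((b - a) ^ 3 / 12 : ℝ) ^ (1 - 1/q) * ((b - a) ^ 3 / 8) ^ (1/q)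
      = (b - a) ^ 3 / 8 * (2/3 : ℝ) ^ (1 - 1/q) := by
    have h123 : ((b - a) ^ 3 / 12 : ℝ) = ((b - a) ^ 3 / 8) * (2/3) := by ring
    rw [h123, Real.mul_rpow h83.le (by norm_num), mul_right_comm, ← Real.rpow_add h83]
    norm_num
  have expand : ∀ S : ℝ, 0 ≤ S →
      ((b - a) ^ 3 / 12) ^ (1 - 1/q) * ((b - a) ^ 3 / 8 * S) ^ (1/q)
        = (2 * (b - a)) * ((b - a) ^ 2 / 16 * (2/3 : ℝ) ^ (1 - 1/q) * S ^ (1/q)) := by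
    intro S hS
    rw [Real.mul_rpow h83.le hS, ← mul_assoc, hcomb]
    ring
  have hfin : (((b - a) ^ 3 / 12) ^ (1 - 1/q) * ((b - a) ^ 3 / 8 * (5 / 12 * A + 1 / 4 * Ba)) ^ (1/q)
      + ((b - a) ^ 3 / 12) ^ (1 - 1/q) * ((b - a) ^ 3 / 8 * (5 / 12 * A + 1 / 4 * Bb)) ^ (1/q))
        / (2 * (b - a))
      = (b - a) ^ 2 / 16 * (2/3 : ℝ) ^ (1 - 1/q) *
        ((5 / 12 * A + 1 / 4 * Ba) ^ (1/q) + (5 / 12 * A + 1 / 4 * Bb) ^ (1/q)) := by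
    rw [expand _ hSa0, expand _ hSb0]
    field_simp
  calc |∫ x in a..b, w x * f'' x| / (2 * (b - a))
      ≤ (((b - a) ^ 3 / 12) ^ (1 - 1/q) * ((b - a) ^ 3 / 8 * (5 / 12 * A + 1 / 4 * Ba)) ^ (1/q)
      + ((b - a) ^ 3 / 12) ^ (1 - 1/q) * ((b - a) ^ 3 / 8 * (5 / 12 * A + 1 / 4 * Bb)) ^ (1/q))
        / (2 * (b - a)) := by gcongr
    _ = _ := hfin
end

section
/- Let f be twice differentiable on an open interval containing [a,b] with |f''|^q convex on [a,b] for some q > 1, and let p = q/(q−1). Then |(f(a)+f(b))/2 − (1/(b−a))∫ₐᵇ f(x) dx| ≤ ((b−a)²/4)·(B(1+p,1+p))^{1/p}·{ [(|f''((a+b)/2)|^q + |f''(a)|^q)/2]^{1/q} + [(|f''((a+b)/2)|^q + |f''(b)|^q)/2]^{1/q} }, where B is the Beta function. -/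
open MeasureTheory Set intervalIntegral

set_option maxHeartbeats 1000000

lemma holder_piece {P Q : ℝ} (hPQ : Real.HolderConjugate P Q) {l r : ℝ} (hlr : l ≤ r)
    (K g : ℝ → ℝ) (hK : Continuous K) (hKnn : ∀ t ∈ Set.Icc l r, 0 ≤ K t)
    (hg : MeasureTheory.IntegrableOn g (Set.Ioc l r))
    (hgnn : ∀ t, 0 ≤ g t) (C : ℝ) (hgb : ∀ t ∈ Set.Ioc l r, g t ≤ C) :
    ∫ t in l..r, K t * g t ≤
      (∫ t in l..r, K t ^ P) ^ (1/P) * (∫ t in l..r, g t ^ Q) ^ (1/Q) := by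
  rw [intervalIntegral.integral_of_le hlr, intervalIntegral.integral_of_le hlr,
    intervalIntegral.integral_of_le hlr]
  set μ := volume.restrict (Set.Ioc l r) with hμ
  haveI : IsFiniteMeasure μ := by
    constructor
    rw [hμ]
    simp [Real.volume_Ioc]
  obtain ⟨CK, hCK⟩ : ∃ CK, ∀ t ∈ Set.Icc l r, ‖K t‖ ≤ CK :=
    isCompact_Icc.exists_bound_of_continuousOn hK.continuousOn
  have hKae : ∀ᵐ t ∂μ, ‖K t‖ ≤ CK :=
    (ae_restrict_iff' measurableSet_Ioc).2 (ae_of_all _ fun t ht => hCK t (Set.Ioc_subset_Icc_self ht))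
  have hgae : ∀ᵐ t ∂μ, ‖g t‖ ≤ max C 0 :=
    (ae_restrict_iff' measurableSet_Ioc).2 (ae_of_all _ fun t ht => by
      rw [Real.norm_of_nonneg (hgnn t)]; exact le_max_of_le_left (hgb t ht))
  have hKm : MemLp K (ENNReal.ofReal P) μ :=
    MemLp.of_bound hK.aestronglyMeasurable CK hKae
  have hgm : MemLp g (ENNReal.ofReal Q) μ :=
    MemLp.of_bound hg.aestronglyMeasurable (max C 0) hgae
  refine MeasureTheory.integral_mul_le_Lp_mul_Lq_of_nonneg hPQ ?_ (ae_of_all _ hgnn) hKm hgm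
  exact (ae_restrict_iff' measurableSet_Ioc).2 (ae_of_all _ fun t ht =>
    hKnn t (Set.Ioc_subset_Icc_self ht))

lemma lin_int (l r c d : ℝ) :
    ∫ t in l..r, (c + t * d) = c * (r - l) + d * ((r^2 - l^2)/2) := by
  rw [intervalIntegral.integral_add intervalIntegrable_const
      (intervalIntegral.intervalIntegrable_id.mul_const d),
    intervalIntegral.integral_const, intervalIntegral.integral_mul_const, integral_id,
    smul_eq_mul]
  ring

theorem stmt_13 (f f' f'' : ℝ → ℝ) (a b q p : ℝ) (hab : a < b) (hq : 1 < q)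
    (hpq : p = q / (q - 1))
    (hf' : ∀ x ∈ Set.Icc a b, HasDerivAt f (f' x) x)
    (hf'' : ∀ x ∈ Set.Icc a b, HasDerivAt f' (f'' x) x)
    (hint : IntervalIntegrable f'' MeasureTheory.volume a b)
    (hconv : ∀ x ∈ Set.Icc a b, ∀ y ∈ Set.Icc a b, ∀ t ∈ Set.Icc (0:ℝ) 1,
      |f'' (t * x + (1 - t) * y)| ^ q ≤ t * |f'' x| ^ q + (1 - t) * |f'' y| ^ q) :
    |(f a + f b) / 2 - (1 / (b - a)) * ∫ u in a..b, f u| ≤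
      (b - a) ^ 2 / 4 *
        (∫ s in (0:ℝ)..1, s ^ ((1 + p) - 1) * (1 - s) ^ ((1 + p) - 1)) ^ (1 / p) *
        (((|f'' ((a + b) / 2)| ^ q + |f'' a| ^ q) / 2) ^ (1 / q)
          + ((|f'' ((a + b) / 2)| ^ q + |f'' b| ^ q) / 2) ^ (1 / q)) := by
  simp only [add_sub_cancel_left]
  have h0 : (0:ℝ) < b - a := by linarith
  have hIcc : Set.uIcc a b = Set.Icc a b := Set.uIcc_of_le hab.le
  -- conjugate exponents
  have hpq' : p.HolderConjugate q := by
    have := Real.HolderConjugate.conjExponent hq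
    rw [Real.conjExponent, ← hpq] at this
    exact this.symm
  have hp1 : 1 < p := hpq'.lt
  have hq0 : (0:ℝ) < q := by linarith
  -- notation
  set m : ℝ := (a + b) / 2 with hm_def
  have hm : m ∈ Set.Icc a b := ⟨by rw [hm_def]; linarith, by rw [hm_def]; linarith⟩
  have haI : a ∈ Set.Icc a b := ⟨le_refl a, hab.le⟩
  have hbI : b ∈ Set.Icc a b := ⟨hab.le, le_refl b⟩
  set Ca : ℝ := |f'' a| ^ q with hCa
  set Cb : ℝ := |f'' b| ^ q with hCb
  set Cm : ℝ := |f'' m| ^ q with hCm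
  have hCa0 : 0 ≤ Ca := Real.rpow_nonneg (abs_nonneg _) q
  have hCb0 : 0 ≤ Cb := Real.rpow_nonneg (abs_nonneg _) q
  have hCm0 : 0 ≤ Cm := Real.rpow_nonneg (abs_nonneg _) q
  set A : ℝ → ℝ := fun t => (b - a) * t + a with hA
  set g : ℝ → ℝ := fun t => |f'' (A t)| with hg
  set K : ℝ → ℝ := fun t => t * (1 - t) with hK
  have hKc : Continuous K := by rw [hK]; continuity
  have hgnn : ∀ t, 0 ≤ g t := fun t => abs_nonneg _
  -- membership of A t
  have hAmem : ∀ t ∈ Set.Icc (0:ℝ) 1, A t ∈ Set.Icc a b := by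
    intro t ht
    constructor
    · show a ≤ (b - a) * t + a
      nlinarith [ht.1, ht.2]
    · show (b - a) * t + a ≤ b
      nlinarith [ht.1, ht.2]
  -- pointwise convexity bounds
  have hconv1 : ∀ t ∈ Set.Icc (0:ℝ) (1/2), g t ^ q ≤ Ca + t * (2*Cm - 2*Ca) := by
    intro t ht
    have harg : (2*t) * m + (1 - 2*t) * a = A t := by rw [hm_def, hA]; ring
    have h := hconv m hm a haI (2*t) ⟨by linarith [ht.1], by linarith [ht.2]⟩
    rw [harg] at h
    calc g t ^ q ≤ 2*t * Cm + (1 - 2*t) * Ca := h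
      _ = Ca + t * (2*Cm - 2*Ca) := by ring
  have hconv2 : ∀ t ∈ Set.Icc (1/2 : ℝ) 1, g t ^ q ≤ (2*Cm - Cb) + t * (2*Cb - 2*Cm) := by
    intro t ht
    have harg : (2*t - 1) * b + (1 - (2*t - 1)) * m = A t := by rw [hm_def, hA]; ring
    have h := hconv b hbI m hm (2*t - 1) ⟨by linarith [ht.1], by linarith [ht.2]⟩
    rw [harg] at h
    calc g t ^ q ≤ (2*t - 1) * Cb + (1 - (2*t - 1)) * Cm := h
      _ = (2*Cm - Cb) + t * (2*Cb - 2*Cm) := by ring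
  have hgq_bdd : ∀ t ∈ Set.Icc (0:ℝ) 1, g t ^ q ≤ Ca + Cb + 2*Cm := by
    intro t ht
    rcases le_total t (1/2) with h | h
    · have := hconv1 t ⟨ht.1, h⟩; nlinarith [ht.1, hCa0, hCm0, hCb0]
    · have := hconv2 t ⟨h, ht.2⟩; nlinarith [ht.2, hCa0, hCm0, hCb0]
  have hgbdd : ∀ t ∈ Set.Icc (0:ℝ) 1, g t ≤ (Ca + Cb + 2*Cm) ^ q⁻¹ := by
    intro t ht
    have h1 : g t = (g t ^ q) ^ q⁻¹ := (Real.rpow_rpow_inv (hgnn t) hq0.ne').symm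
    rw [h1]
    exact Real.rpow_le_rpow (Real.rpow_nonneg (hgnn t) q) (hgq_bdd t ht)
      (by positivity)
  -- integrability of f'' ∘ A
  have hgA_int : IntervalIntegrable (fun t => f'' (A t)) volume 0 1 := by
    have h1 := (hint.comp_add_right a).comp_mul_left (c := b - a)
    rw [hA]
    simpa [sub_self, div_self h0.ne'] using h1
  have hg_int : IntervalIntegrable g volume 0 1 := hgA_int.abs
  have hg_int' : ∀ l r : ℝ, 0 ≤ l → l ≤ r → r ≤ 1 → IntervalIntegrable g volume l r := by
    intro l r hl hlr hr
    refine hg_int.mono_set (Set.uIcc_subset_uIcc ?_ ?_) <;>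
      rw [Set.uIcc_of_le zero_le_one] <;> constructor <;> linarith
  -- integrability of g^q on subintervals of [0,1]
  have hgq_int : ∀ l r : ℝ, 0 ≤ l → l ≤ r → r ≤ 1 →
      IntervalIntegrable (fun t => g t ^ q) volume l r := by
    intro l r hl hlr hr
    rw [intervalIntegrable_iff_integrableOn_Ioc_of_le hlr]
    have hsub : Set.Ioc l r ⊆ Set.Ioc (0:ℝ) 1 := Set.Ioc_subset_Ioc hl hr
    have h1 : AEStronglyMeasurable (fun t => f'' (A t)) (volume.restrict (Set.Ioc l r)) :=
      (hgA_int.1.aestronglyMeasurable).mono_measure (Measure.restrict_mono hsub le_rfl)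
    have hcont : Continuous fun x : ℝ => |x| ^ q :=
      (continuous_iff_continuousAt.2 fun x =>
        Real.continuousAt_rpow_const x q (Or.inr hq0.le)).comp continuous_abs
    have hmeas : AEStronglyMeasurable (fun t => g t ^ q) (volume.restrict (Set.Ioc l r)) :=
      hcont.comp_aestronglyMeasurable h1
    refine Integrable.mono' (integrable_const (Ca + Cb + 2*Cm)) hmeas ?_
    refine (ae_restrict_iff' measurableSet_Ioc).2 (ae_of_all _ fun t ht => ?_)
    rw [Real.norm_of_nonneg (Real.rpow_nonneg (hgnn t) q)]
    exact hgq_bdd t ⟨le_trans hl ht.1.le, le_trans ht.2 hr⟩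
  -- continuity of f, f'
  have hfc : ContinuousOn f (Set.Icc a b) := fun x hx => (hf' x hx).continuousAt.continuousWithinAt
  have hf'c : ContinuousOn f' (Set.Icc a b) := fun x hx => (hf'' x hx).continuousAt.continuousWithinAt
  have hfInt : IntervalIntegrable f volume a b := (hIcc ▸ hfc).intervalIntegrable
  have hf'Int : IntervalIntegrable f' volume a b := (hIcc ▸ hf'c).intervalIntegrable
  -- integration by parts identity
  have key : ∫ x in a..b, (x - a) * (b - x) * f'' x
      = (b - a) * (f a + f b) - 2 * ∫ x in a..b, f x := by
    have ibp1 : ∫ x in a..b, (x - a) * (b - x) * f'' x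
        = (b-a)*(b-b) * f' b - (a-a)*(b-a) * f' a - ∫ x in a..b, (a + b - 2*x) * f' x := by
      refine intervalIntegral.integral_mul_deriv_eq_deriv_mul
        (u := fun x => (x - a) * (b - x)) (u' := fun x => a + b - 2*x)
        (v := f') (v' := f'') (fun x hx => ?_) (fun x hx => hf'' x (hIcc ▸ hx)) ?_ hint
      · have h1 : HasDerivAt (fun x => (x - a) * (b - x)) (1 * (b - x) + (x - a) * (0 - 1)) x :=
          (((hasDerivAt_id x).sub_const a).mul ((hasDerivAt_const x b).sub (hasDerivAt_id x)))
        exact h1.congr_deriv (by ring)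
      · exact ((by fun_prop : Continuous fun x : ℝ => a + b - 2*x).continuousOn).intervalIntegrable
    have ibp2 : ∫ x in a..b, (a + b - 2*x) * f' x
        = (a + b - 2*b) * f b - (a + b - 2*a) * f a - ∫ x in a..b, (-2) * f x := by
      refine intervalIntegral.integral_mul_deriv_eq_deriv_mul
        (u := fun x => a + b - 2*x) (u' := fun x => (-2 : ℝ))
        (v := f) (v' := f') (fun x hx => ?_) (fun x hx => hf' x (hIcc ▸ hx)) ?_ hf'Int
      · have h1 : HasDerivAt (fun x => a + b - 2*x) (0 - 2*1) x :=
          (hasDerivAt_const x (a+b)).sub ((hasDerivAt_id x).const_mul 2)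
        exact h1.congr_deriv (by ring)
      · exact intervalIntegrable_const
    rw [ibp1, ibp2, intervalIntegral.integral_const_mul]
    ring
  -- change of variables
  have cov : ∫ x in a..b, (x - a) * (b - x) * f'' x
      = (b - a) * ∫ t in (0:ℝ)..1, (A t - a) * (b - A t) * f'' (A t) := by
    have h := intervalIntegral.integral_comp_mul_add (a := (0:ℝ)) (b := 1)
      (fun x => (x - a) * (b - x) * f'' x) h0.ne' a
    simp only [mul_zero, zero_add, mul_one, smul_eq_mul] at h
    rw [show (∫ t in (0:ℝ)..1, (A t - a) * (b - A t) * f'' (A t))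
        = ∫ t in (0:ℝ)..1, ((b-a)*t + a - a) * (b - ((b-a)*t + a)) * f'' ((b-a)*t + a) from rfl]
    rw [h, sub_add_cancel]
    field_simp
  have hI : ∫ t in (0:ℝ)..1, (A t - a) * (b - A t) * f'' (A t)
      = (b - a)^2 * ∫ t in (0:ℝ)..1, K t * f'' (A t) := by
    rw [← intervalIntegral.integral_const_mul]
    refine intervalIntegral.integral_congr fun t ht => ?_
    show ((b-a)*t + a - a) * (b - ((b-a)*t + a)) * f'' (A t) = (b-a)^2 * (t * (1 - t) * f'' (A t))
    ring
  have E_eq : (f a + f b) / 2 - (1 / (b - a)) * ∫ u in a..b, f u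
      = (b - a)^2/2 * ∫ t in (0:ℝ)..1, K t * f'' (A t) := by
    have h1 : ∫ x in a..b, (x - a) * (b - x) * f'' x
        = (b - a)^3 * ∫ t in (0:ℝ)..1, K t * f'' (A t) := by rw [cov, hI]; ring
    rw [h1] at key
    field_simp
    linear_combination (-1 : ℝ) * key
  -- bound by the absolute integral
  have hKg_int : ∀ l r : ℝ, 0 ≤ l → l ≤ r → r ≤ 1 →
      IntervalIntegrable (fun t => K t * g t) volume l r := fun l r hl hlr hr =>
    (hg_int' l r hl hlr hr).continuousOn_mul hKc.continuousOn
  have habs : |(f a + f b) / 2 - (1 / (b - a)) * ∫ u in a..b, f u|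
      ≤ (b - a)^2/2 * ∫ t in (0:ℝ)..1, K t * g t := by
    rw [E_eq, abs_mul, abs_of_nonneg (by positivity : (0:ℝ) ≤ (b-a)^2/2)]
    refine mul_le_mul_of_nonneg_left ?_ (by positivity)
    calc |∫ t in (0:ℝ)..1, K t * f'' (A t)| ≤ ∫ t in (0:ℝ)..1, |K t * f'' (A t)| :=
          intervalIntegral.abs_integral_le_integral_abs zero_le_one
      _ = ∫ t in (0:ℝ)..1, K t * g t := by
          refine intervalIntegral.integral_congr fun t ht => ?_
          rw [Set.uIcc_of_le zero_le_one] at ht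
          rw [abs_mul, abs_of_nonneg (mul_nonneg ht.1 (by linarith [ht.2]) : 0 ≤ K t)]
  have hsplit : ∫ t in (0:ℝ)..1, K t * g t
      = (∫ t in (0:ℝ)..(1/2), K t * g t) + ∫ t in (1/2:ℝ)..1, K t * g t :=
    (intervalIntegral.integral_add_adjacent_intervals
      (hKg_int 0 (1/2) le_rfl (by norm_num) (by norm_num))
      (hKg_int (1/2) 1 (by norm_num) (by norm_num) le_rfl)).symm
  -- kernel integral values
  set Bv : ℝ := ∫ s in (0:ℝ)..1, s ^ p * (1-s) ^ p with hBv
  have hrpc : Continuous fun x : ℝ => x ^ p :=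
    continuous_iff_continuousAt.2 fun x => Real.continuousAt_rpow_const x p (Or.inr (by linarith))
  have hKpc : Continuous fun t : ℝ => t ^ p * (1-t) ^ p :=
    hrpc.mul (hrpc.comp (continuous_const.sub continuous_id))
  have hsym : ∫ t in (1/2:ℝ)..1, t ^ p * (1-t) ^ p = ∫ t in (0:ℝ)..(1/2), t ^ p * (1-t) ^ p := by
    have h := intervalIntegral.integral_comp_sub_left (a := (1/2:ℝ)) (b := 1)
      (fun s => s ^ p * (1-s) ^ p) 1
    norm_num at h
    rw [← h]
    exact intervalIntegral.integral_congr fun t _ => mul_comm _ _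
  have hadj : (∫ t in (0:ℝ)..(1/2), t ^ p * (1-t) ^ p) + ∫ t in (1/2:ℝ)..1, t ^ p * (1-t) ^ p
      = Bv :=
    intervalIntegral.integral_add_adjacent_intervals
      (hKpc.intervalIntegrable _ _) (hKpc.intervalIntegrable _ _)
  have hBv0 : 0 ≤ Bv := by
    rw [hBv]
    refine intervalIntegral.integral_nonneg zero_le_one fun t ht => ?_
    exact mul_nonneg (Real.rpow_nonneg ht.1 p) (Real.rpow_nonneg (by linarith [ht.2]) p)
  have hK1 : ∫ t in (0:ℝ)..(1/2), K t ^ p = Bv/2 := by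
    have e : ∫ t in (0:ℝ)..(1/2), K t ^ p = ∫ t in (0:ℝ)..(1/2), t ^ p * (1-t) ^ p := by
      refine intervalIntegral.integral_congr fun t ht => ?_
      rw [Set.uIcc_of_le (by norm_num : (0:ℝ) ≤ 1/2)] at ht
      exact Real.mul_rpow ht.1 (by linarith [ht.2])
    rw [e]; linarith [hadj, hsym]
  have hK2 : ∫ t in (1/2:ℝ)..1, K t ^ p = Bv/2 := by
    have e : ∫ t in (1/2:ℝ)..1, K t ^ p = ∫ t in (1/2:ℝ)..1, t ^ p * (1-t) ^ p := by
      refine intervalIntegral.integral_congr fun t ht => ?_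
      rw [Set.uIcc_of_le (by norm_num : (1/2:ℝ) ≤ 1)] at ht
      exact Real.mul_rpow (by linarith [ht.1]) (by linarith [ht.2])
    rw [e]; linarith [hadj, hsym]
  -- convexity integrals
  have hlin_int : ∀ c d : ℝ, IntervalIntegrable (fun t => c + t * d) volume 0 (1/2) ∧
      IntervalIntegrable (fun t => c + t * d) volume (1/2) 1 := fun c d =>
    ⟨(continuous_const.add (continuous_id.mul continuous_const)).intervalIntegrable _ _,
     (continuous_const.add (continuous_id.mul continuous_const)).intervalIntegrable _ _⟩
  have hJ1nn : 0 ≤ ∫ t in (0:ℝ)..(1/2), g t ^ q :=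
    intervalIntegral.integral_nonneg (by norm_num) fun t _ => Real.rpow_nonneg (hgnn t) q
  have hJ2nn : 0 ≤ ∫ t in (1/2:ℝ)..1, g t ^ q :=
    intervalIntegral.integral_nonneg (by norm_num) fun t _ => Real.rpow_nonneg (hgnn t) q
  have hJ1 : ∫ t in (0:ℝ)..(1/2), g t ^ q ≤ (Cm + Ca)/2/2 := by
    calc ∫ t in (0:ℝ)..(1/2), g t ^ q
        ≤ ∫ t in (0:ℝ)..(1/2), (Ca + t * (2*Cm - 2*Ca)) :=
          intervalIntegral.integral_mono_on (by norm_num)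
            (hgq_int 0 (1/2) le_rfl (by norm_num) (by norm_num)) (hlin_int _ _).1 hconv1
      _ = (Cm + Ca)/2/2 := by rw [lin_int]; norm_num; ring
  have hJ2 : ∫ t in (1/2:ℝ)..1, g t ^ q ≤ (Cm + Cb)/2/2 := by
    calc ∫ t in (1/2:ℝ)..1, g t ^ q
        ≤ ∫ t in (1/2:ℝ)..1, ((2*Cm - Cb) + t * (2*Cb - 2*Cm)) :=
          intervalIntegral.integral_mono_on (by norm_num)
            (hgq_int (1/2) 1 (by norm_num) (by norm_num) le_rfl) (hlin_int _ _).2 hconv2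
      _ = (Cm + Cb)/2/2 := by rw [lin_int]; norm_num; ring
  -- Hölder
  have hH1 : ∫ t in (0:ℝ)..(1/2), K t * g t ≤ (Bv/2) ^ (1/p) * ((Cm + Ca)/2/2) ^ (1/q) := by
    have h := holder_piece hpq' (by norm_num : (0:ℝ) ≤ 1/2) K g hKc
      (fun t ht => mul_nonneg ht.1 (by linarith [ht.2]))
      (hg_int' 0 (1/2) le_rfl (by norm_num) (by norm_num)).1 hgnn
      ((Ca + Cb + 2*Cm) ^ q⁻¹)
      (fun t ht => hgbdd t ⟨ht.1.le, by linarith [ht.2]⟩)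
    rw [hK1] at h
    refine h.trans (mul_le_mul_of_nonneg_left
      (Real.rpow_le_rpow hJ1nn hJ1 (by positivity)) (Real.rpow_nonneg (by positivity) _))
  have hH2 : ∫ t in (1/2:ℝ)..1, K t * g t ≤ (Bv/2) ^ (1/p) * ((Cm + Cb)/2/2) ^ (1/q) := by
    have h := holder_piece hpq' (by norm_num : (1/2:ℝ) ≤ 1) K g hKc
      (fun t ht => mul_nonneg (by linarith [ht.1]) (by linarith [ht.2]))
      (hg_int' (1/2) 1 (by norm_num) (by norm_num) le_rfl).1 hgnn
      ((Ca + Cb + 2*Cm) ^ q⁻¹)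
      (fun t ht => hgbdd t ⟨by linarith [ht.1], ht.2⟩)
    rw [hK2] at h
    refine h.trans (mul_le_mul_of_nonneg_left
      (Real.rpow_le_rpow hJ2nn hJ2 (by positivity)) (Real.rpow_nonneg (by positivity) _))
  -- final algebra
  have halg : ∀ S : ℝ, 0 ≤ S → (Bv/2) ^ (1/p) * (S/2/2) ^ (1/q)
      = (1/2) * (Bv ^ (1/p) * (S/2) ^ (1/q)) := by
    intro S hS
    rw [show Bv/2 = Bv * (1/2) by ring, show S/2/2 = (S/2) * (1/2) by ring,
      Real.mul_rpow hBv0 (by norm_num), Real.mul_rpow (by positivity) (by norm_num)]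
    have h3 : ((1:ℝ)/2) ^ (1/p) * ((1:ℝ)/2) ^ (1/q) = 1/2 := by
      rw [← Real.rpow_add (by norm_num : (0:ℝ) < 1/2)]
      rw [show 1/p + 1/q = 1 by rw [one_div, one_div]; exact hpq'.inv_add_inv_eq_one,
        Real.rpow_one]
    linear_combination Bv ^ (1/p) * (S/2) ^ (1/q) * h3
  calc |(f a + f b) / 2 - (1 / (b - a)) * ∫ u in a..b, f u|
      ≤ (b - a)^2/2 * ∫ t in (0:ℝ)..1, K t * g t := habs
    _ = (b - a)^2/2 * ((∫ t in (0:ℝ)..(1/2), K t * g t) + ∫ t in (1/2:ℝ)..1, K t * g t) := by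
        rw [hsplit]
    _ ≤ (b - a)^2/2 * ((Bv/2) ^ (1/p) * ((Cm + Ca)/2/2) ^ (1/q)
          + (Bv/2) ^ (1/p) * ((Cm + Cb)/2/2) ^ (1/q)) :=
        mul_le_mul_of_nonneg_left (add_le_add hH1 hH2) (by positivity)
    _ = (b - a) ^ 2 / 4 * Bv ^ (1/p) * (((Cm + Ca)/2) ^ (1/q) + ((Cm + Cb)/2) ^ (1/q)) := by
        rw [halg _ (by positivity), halg _ (by positivity)]; ring
end

section
/- Let f be twice differentiable on an open interval containing [a,b] with |f''|^q convex on [a,b] for some q > 1, and let p = q/(q−1). Then |f((a+b)/2) − (1/(b−a))∫ₐᵇ f(x) dx| ≤ ((b−a)²/16)·(1/(2p+1))^{1/p}·{ [(|f''((a+b)/2)|^q + |f''(a)|^q)/2]^{1/q} + [(|f''((a+b)/2)|^q + |f''(b)|^q)/2]^{1/q} }. -/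
open MeasureTheory Set intervalIntegral

set_option maxHeartbeats 1000000 in
lemma aux_holder_half (q p : ℝ) (hq : 1 < q) (hpq : p = q / (q - 1))
    (g : ℝ → ℝ) (c d : ℝ) (hcd : c < d)
    (hg : IntervalIntegrable g volume c d)
    (hbound : ∀ x ∈ Set.Icc c d,
      |g x| ^ q ≤ ((x - c) / (d - c)) * |g d| ^ q + ((d - x) / (d - c)) * |g c| ^ q) :
    ∫ x in c..d, (x - c) ^ 2 * |g x| ≤
      (d - c) ^ 3 * (1 / (2 * p + 1)) ^ (1 / p) * ((|g c| ^ q + |g d| ^ q) / 2) ^ (1 / q) := by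
  have hqp : q.HolderConjugate p := (Real.holderConjugate_iff_eq_conjExponent hq).2 hpq
  have hpq' : p.HolderConjugate q := hqp.symm
  have hp1 : 1 < p := hpq'.lt
  have hp0 : 0 < p := hpq'.pos
  have hq0 : 0 < q := hqp.pos
  have hdc : (0:ℝ) < d - c := by linarith
  set μ := volume.restrict (Set.Ioc c d) with hμ
  haveI : IsFiniteMeasure μ := by
    constructor
    rw [hμ, Measure.restrict_apply_univ]
    exact measure_Ioc_lt_top
  set Gc := |g c| ^ q with hGc
  set Gd := |g d| ^ q with hGd
  have hGc0 : 0 ≤ Gc := Real.rpow_nonneg (abs_nonneg _) _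
  have hGd0 : 0 ≤ Gd := Real.rpow_nonneg (abs_nonneg _) _
  set M := max Gc Gd with hM
  have hM0 : 0 ≤ M := le_trans hGc0 (le_max_left _ _)
  -- pointwise bound |g x|^q ≤ M on Icc c d
  have hbM : ∀ x ∈ Set.Icc c d, |g x| ^ q ≤ M := by
    intro x hx
    refine (hbound x hx).trans ?_
    have h1 : 0 ≤ (x - c) / (d - c) := div_nonneg (by linarith [hx.1]) hdc.le
    have h2 : 0 ≤ (d - x) / (d - c) := div_nonneg (by linarith [hx.2]) hdc.le
    have h3 : (x - c) / (d - c) + (d - x) / (d - c) = 1 := by field_simp; ring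
    calc ((x - c)/(d - c)) * Gd + ((d - x)/(d - c)) * Gc
        ≤ ((x - c)/(d - c)) * M + ((d - x)/(d - c)) * M := by
          gcongr
          · exact le_max_right _ _
          · exact le_max_left _ _
      _ = M := by rw [← add_mul, h3, one_mul]
  have hgmeas : AEStronglyMeasurable g μ := hg.1.aestronglyMeasurable
  -- Memℒp of the weight
  have hW : MemLp (fun x => (x - c) ^ 2) (ENNReal.ofReal p) μ := by
    refine MemLp.of_bound (Continuous.aestronglyMeasurable (by continuity)) ((d - c) ^ 2) ?_
    filter_upwards [ae_restrict_mem measurableSet_Ioc] with x hx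
    rw [Real.norm_eq_abs, abs_of_nonneg (sq_nonneg _)]
    have : |x - c| ≤ |d - c| := by
      rw [abs_of_nonneg (by linarith [hx.1.le]), abs_of_nonneg hdc.le]
      linarith [hx.2]
    calc (x - c)^2 = |x - c|^2 := (sq_abs _).symm
      _ ≤ |d - c|^2 := by gcongr
      _ = (d - c)^2 := sq_abs _
  -- Memℒp of g
  have hG : MemLp g (ENNReal.ofReal q) μ := by
    refine MemLp.of_bound hgmeas (M ^ (1/q)) ?_
    filter_upwards [ae_restrict_mem measurableSet_Ioc] with x hx
    have hx' : x ∈ Set.Icc c d := Set.Ioc_subset_Icc_self hx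
    rw [Real.norm_eq_abs]
    have h1 : |g x| = (|g x| ^ q) ^ (1/q) := by
      rw [← Real.rpow_mul (abs_nonneg _), mul_one_div, div_self hq0.ne', Real.rpow_one]
    rw [h1]
    exact Real.rpow_le_rpow (Real.rpow_nonneg (abs_nonneg _) _) (hbM x hx') (by positivity)
  -- Hölder
  have holder := integral_mul_norm_le_Lp_mul_Lq hpq' hW hG
  -- rewrite norms
  simp only [Real.norm_eq_abs, abs_pow, sq_abs] at holder
  have h2p : (0:ℝ) < 2 * p + 1 := by linarith
  -- integrability of |g|^q
  have hGq_int : Integrable (fun x => |g x| ^ q) μ := by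
    have := hG.integrable_norm_rpow (by simp [hq0.le]; exact hq0) (by simp)
    simpa [Real.norm_eq_abs, ENNReal.toReal_ofReal hq0.le] using this
  -- compute the weight integral
  have hX : (∫ a, ((a - c) ^ 2) ^ p ∂μ) = (d - c) ^ (2 * p + 1) / (2 * p + 1) := by
    rw [show (∫ a, ((a - c) ^ 2) ^ p ∂μ) = ∫ x in c..d, ((x - c) ^ 2) ^ p from
      (intervalIntegral.integral_of_le hcd.le).symm]
    rw [intervalIntegral.integral_comp_sub_right (fun y => (y ^ 2) ^ p) c, sub_self]
    have hcongr : ∫ y in (0:ℝ)..(d - c), (y ^ 2) ^ p = ∫ y in (0:ℝ)..(d - c), y ^ (2 * p) := by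
      apply intervalIntegral.integral_congr
      intro y hy
      rw [Set.uIcc_of_le hdc.le] at hy
      have hy0 : (0:ℝ) ≤ y := hy.1
      show (y ^ 2) ^ p = y ^ (2 * p)
      rw [← Real.rpow_natCast y 2, ← Real.rpow_mul hy0]
      norm_num
    rw [hcongr, integral_rpow (Or.inl (by linarith))]
    rw [Real.zero_rpow (by linarith : (2*p+1) ≠ 0)]
    ring
  -- bound the |g|^q integral
  have hY : (∫ a, |g a| ^ q ∂μ) ≤ (d - c) * ((Gc + Gd) / 2) := by
    have hIG : IntervalIntegrable (fun x => |g x| ^ q) volume c d := by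
      rw [intervalIntegrable_iff_integrableOn_Ioc_of_le hcd.le]
      exact hGq_int
    have hIL : IntervalIntegrable
        (fun x => (x - c) / (d - c) * Gd + (d - x) / (d - c) * Gc) volume c d :=
      (Continuous.intervalIntegrable (by continuity) c d)
    have hmono := intervalIntegral.integral_mono_on hcd.le hIG hIL hbound
    have hlin : ∫ x in c..d, ((x - c) / (d - c) * Gd + (d - x) / (d - c) * Gc) =
        (d - c) * ((Gc + Gd) / 2) := by
      have hD : ∀ x : ℝ, HasDerivAt
          (fun y => (y - c) ^ 2 / (2 * (d - c)) * Gd - (d - y) ^ 2 / (2 * (d - c)) * Gc)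
          ((x - c) / (d - c) * Gd + (d - x) / (d - c) * Gc) x := by
        intro x
        have h1 : HasDerivAt (fun y => (y - c) ^ 2 / (2 * (d - c)) * Gd)
            ((2 * (x - c) ^ 1 * 1) / (2 * (d - c)) * Gd) x :=
          ((((hasDerivAt_id x).sub_const c).pow 2).div_const _).mul_const _
        have h2 : HasDerivAt (fun y => (d - y) ^ 2 / (2 * (d - c)) * Gc)
            ((2 * (d - x) ^ 1 * (0 - 1)) / (2 * (d - c)) * Gc) x :=
          ((((hasDerivAt_const x d).sub (hasDerivAt_id x)).pow 2).div_const _).mul_const _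
        refine (h1.sub h2).congr_deriv ?_
        field_simp
        ring
      rw [intervalIntegral.integral_eq_sub_of_hasDerivAt (fun x _ => hD x) hIL]
      field_simp
      ring
    calc (∫ a, |g a| ^ q ∂μ) = ∫ x in c..d, |g x| ^ q :=
          (intervalIntegral.integral_of_le hcd.le).symm
      _ ≤ _ := hmono
      _ = _ := hlin
  -- put everything together
  have hμeq : ∫ x in c..d, (x - c) ^ 2 * |g x| = ∫ a, (a - c) ^ 2 * |g a| ∂μ :=
    intervalIntegral.integral_of_le hcd.le
  have hYnn : 0 ≤ ∫ a, |g a| ^ q ∂μ :=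
    integral_nonneg fun x => Real.rpow_nonneg (abs_nonneg _) _
  have step2 : (∫ a, |g a| ^ q ∂μ) ^ (1 / q) ≤ ((d - c) * ((Gc + Gd) / 2)) ^ (1 / q) :=
    Real.rpow_le_rpow hYnn hY (by positivity)
  have hXnn : (0:ℝ) ≤ ((d - c) ^ (2 * p + 1) / (2 * p + 1)) ^ (1 / p) := by positivity
  have main : ∫ x in c..d, (x - c) ^ 2 * |g x| ≤
      ((d - c) ^ (2 * p + 1) / (2 * p + 1)) ^ (1 / p) * ((d - c) * ((Gc + Gd) / 2)) ^ (1 / q) := by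
    rw [hμeq]
    refine holder.trans ?_
    rw [hX]
    exact mul_le_mul_of_nonneg_left step2 hXnn
  refine main.trans_eq ?_
  have hGnn : (0:ℝ) ≤ (Gc + Gd) / 2 := by positivity
  have e1 : ((d - c) ^ (2 * p + 1) / (2 * p + 1)) ^ (1 / p) =
      (d - c) ^ ((2 * p + 1) * (1 / p)) * (1 / (2 * p + 1)) ^ (1 / p) := by
    rw [Real.div_rpow (Real.rpow_nonneg hdc.le _) h2p.le, ← Real.rpow_mul hdc.le,
        one_div (2 * p + 1), Real.inv_rpow h2p.le, div_eq_mul_inv]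
  have e2 : ((d - c) * ((Gc + Gd) / 2)) ^ (1 / q) =
      (d - c) ^ (1 / q) * ((Gc + Gd) / 2) ^ (1 / q) := Real.mul_rpow hdc.le hGnn
  have e3 : (d - c) ^ ((2 * p + 1) * (1 / p)) * (d - c) ^ (1 / q) = (d - c) ^ (3:ℕ) := by
    have hinv : 1 / p + 1 / q = 1 := by
      rw [one_div, one_div]; exact hpq'.inv_add_inv_eq_one
    have h4 : (2 * p + 1) * (1 / p) = 2 + 1 / p := by
      rw [mul_one_div, add_div, mul_div_assoc, div_self hp0.ne', mul_one]
    have h5 : (2 * p + 1) * (1 / p) + 1 / q = 3 := by rw [h4]; linarith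
    rw [← Real.rpow_add hdc, h5, show ((3:ℝ)) = ((3:ℕ):ℝ) by norm_num,
        Real.rpow_natCast]
  rw [e1, e2, mul_mul_mul_comm, e3, ← mul_assoc]


set_option maxHeartbeats 2000000 in
theorem stmt_14 (f f' f'' : ℝ → ℝ) (a b q p : ℝ) (hab : a < b) (hq : 1 < q)
    (hpq : p = q / (q - 1))
    (hf' : ∀ x ∈ Set.Icc a b, HasDerivAt f (f' x) x)
    (hf'' : ∀ x ∈ Set.Icc a b, HasDerivAt f' (f'' x) x)
    (hint : IntervalIntegrable f'' MeasureTheory.volume a b)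
    (hconv : ∀ x ∈ Set.Icc a b, ∀ y ∈ Set.Icc a b, ∀ t ∈ Set.Icc (0:ℝ) 1,
      |f'' (t * x + (1 - t) * y)| ^ q ≤ t * |f'' x| ^ q + (1 - t) * |f'' y| ^ q) :
    |f ((a + b) / 2) - (1 / (b - a)) * ∫ u in a..b, f u| ≤
      (b - a) ^ 2 / 16 * (1 / (2 * p + 1)) ^ (1 / p) *
        (((|f'' ((a + b) / 2)| ^ q + |f'' a| ^ q) / 2) ^ (1 / q)
          + ((|f'' ((a + b) / 2)| ^ q + |f'' b| ^ q) / 2) ^ (1 / q)) := by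
  set m := (a + b) / 2 with hm
  have ham : a < m := by rw [hm]; linarith
  have hmb : m < b := by rw [hm]; linarith
  have hba : (0:ℝ) < b - a := by linarith
  have hma : (0:ℝ) < m - a := by linarith
  have hbm : (0:ℝ) < b - m := by linarith
  have hmem : m ∈ Set.Icc a b := ⟨ham.le, hmb.le⟩
  have hamem : a ∈ Set.Icc a b := ⟨le_rfl, hab.le⟩
  have hbmem : b ∈ Set.Icc a b := ⟨hab.le, le_rfl⟩
  have hsub1 : Set.uIcc a m ⊆ Set.Icc a b := by
    rw [Set.uIcc_of_le ham.le]; exact Set.Icc_subset_Icc le_rfl hmb.le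
  have hsub2 : Set.uIcc m b ⊆ Set.Icc a b := by
    rw [Set.uIcc_of_le hmb.le]; exact Set.Icc_subset_Icc ham.le le_rfl
  have hcontf : ContinuousOn f (Set.Icc a b) :=
    fun x hx => (hf' x hx).continuousAt.continuousWithinAt
  have hcontf' : ContinuousOn f' (Set.Icc a b) :=
    fun x hx => (hf'' x hx).continuousAt.continuousWithinAt
  have hf''1 : IntervalIntegrable f'' MeasureTheory.volume a m := by
    apply hint.mono_set
    rw [Set.uIcc_of_le hab.le]; exact hsub1
  have hf''2 : IntervalIntegrable f'' MeasureTheory.volume m b := by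
    apply hint.mono_set
    rw [Set.uIcc_of_le hab.le]; exact hsub2
  have hfint1 : IntervalIntegrable f MeasureTheory.volume a m :=
    (hcontf.mono hsub1).intervalIntegrable
  have hfint2 : IntervalIntegrable f MeasureTheory.volume m b :=
    (hcontf.mono hsub2).intervalIntegrable
  have hf'int1 : IntervalIntegrable f' MeasureTheory.volume a m :=
    (hcontf'.mono hsub1).intervalIntegrable
  have hf'int2 : IntervalIntegrable f' MeasureTheory.volume m b :=
    (hcontf'.mono hsub2).intervalIntegrable
  -- derivatives of the weights
  have hu1 : ∀ x : ℝ, HasDerivAt (fun y => (y - a) ^ 2 / 2) (x - a) x := by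
    intro x
    have h := (((hasDerivAt_id x).sub_const a).pow 2).div_const 2
    refine h.congr_deriv ?_
    simp
  have hu2 : ∀ x : ℝ, HasDerivAt (fun y => (y - b) ^ 2 / 2) (x - b) x := by
    intro x
    have h := (((hasDerivAt_id x).sub_const b).pow 2).div_const 2
    refine h.congr_deriv ?_
    simp
  -- integration by parts
  have parts1a := intervalIntegral.integral_mul_deriv_eq_deriv_mul
    (a := a) (b := m) (u := fun x => (x - a) ^ 2 / 2) (v := f')
    (u' := fun x => x - a) (v' := f'')
    (fun x _ => hu1 x) (fun x hx => hf'' x (hsub1 hx))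
    ((continuous_id.sub continuous_const).intervalIntegrable a m) hf''1
  have parts1b := intervalIntegral.integral_mul_deriv_eq_deriv_mul
    (a := a) (b := m) (u := fun x => x - a) (v := f)
    (u' := fun _ => (1:ℝ)) (v' := f')
    (fun x _ => (hasDerivAt_id x).sub_const a) (fun x hx => hf' x (hsub1 hx))
    (intervalIntegrable_const) hf'int1
  have parts2a := intervalIntegral.integral_mul_deriv_eq_deriv_mul
    (a := m) (b := b) (u := fun x => (x - b) ^ 2 / 2) (v := f')
    (u' := fun x => x - b) (v' := f'')
    (fun x _ => hu2 x) (fun x hx => hf'' x (hsub2 hx))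
    ((continuous_id.sub continuous_const).intervalIntegrable m b) hf''2
  have parts2b := intervalIntegral.integral_mul_deriv_eq_deriv_mul
    (a := m) (b := b) (u := fun x => x - b) (v := f)
    (u' := fun _ => (1:ℝ)) (v' := f')
    (fun x _ => (hasDerivAt_id x).sub_const b) (fun x hx => hf' x (hsub2 hx))
    (intervalIntegrable_const) hf'int2
  simp only [one_mul] at parts1b parts2b
  have hIab : (∫ u in a..b, f u) = (∫ x in a..m, f x) + ∫ x in m..b, f x :=
    (intervalIntegral.integral_add_adjacent_intervals hfint1 hfint2).symm
  -- the key identity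
  have hiden : f m - (1 / (b - a)) * ∫ u in a..b, f u =
      -(1 / (b - a)) * ((∫ x in a..m, (x - a) ^ 2 / 2 * f'' x)
        + ∫ x in m..b, (x - b) ^ 2 / 2 * f'' x) := by
    rw [parts1a, parts1b, parts2a, parts2b, hIab, hm]
    field_simp
    ring
  -- convexity bound on [a, m]
  have hbound1 : ∀ x ∈ Set.Icc a m, |f'' x| ^ q ≤
      ((x - a) / (m - a)) * |f'' m| ^ q + ((m - x) / (m - a)) * |f'' a| ^ q := by
    intro x hx
    set t := (x - a) / (m - a) with ht
    have ht0 : 0 ≤ t := div_nonneg (by linarith [hx.1]) hma.le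
    have ht1 : t ≤ 1 := by rw [ht, div_le_one hma]; linarith [hx.2]
    have hcv := hconv m hmem a hamem t ⟨ht0, ht1⟩
    have harg : t * m + (1 - t) * a = x := by rw [ht]; field_simp; ring
    rw [harg] at hcv
    have h1t : 1 - t = (m - x) / (m - a) := by rw [ht]; field_simp; ring
    rw [← h1t]
    exact hcv
  have hkey1 := aux_holder_half q p hq hpq f'' a m ham hf''1 hbound1
  -- reflection for the right half
  set g : ℝ → ℝ := fun u => f'' (m + b - u) with hgdef
  have hgb : g b = f'' m := by show f'' (m + b - b) = f'' m; norm_num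
  have hgm : g m = f'' b := by show f'' (m + b - m) = f'' b; norm_num
  have hg_int : IntervalIntegrable g MeasureTheory.volume m b := by
    have h := hf''2.comp_sub_left (m + b)
    have e1 : m + b - b = m := by ring
    have e2 : m + b - m = b := by ring
    rw [e1, e2] at h
    exact h.symm
  have hbound2 : ∀ u ∈ Set.Icc m b, |g u| ^ q ≤
      ((u - m) / (b - m)) * |g b| ^ q + ((b - u) / (b - m)) * |g m| ^ q := by
    intro u hu
    set t := (b - u) / (b - m) with ht
    have ht0 : 0 ≤ t := div_nonneg (by linarith [hu.2]) hbm.le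
    have ht1 : t ≤ 1 := by rw [ht, div_le_one hbm]; linarith [hu.1]
    have hcv := hconv b hbmem m hmem t ⟨ht0, ht1⟩
    have harg : t * b + (1 - t) * m = m + b - u := by rw [ht]; field_simp; ring_nf
    rw [harg] at hcv
    have h1t : 1 - t = (u - m) / (b - m) := by rw [ht]; field_simp; ring
    rw [hgb, hgm, ← h1t]
    show |f'' (m + b - u)| ^ q ≤ (1 - t) * |f'' m| ^ q + t * |f'' b| ^ q
    linarith [hcv]
  have hkey2 := aux_holder_half q p hq hpq g m b hmb hg_int hbound2
  rw [hgm, hgb] at hkey2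
  -- reflection identity for the integral
  have hrefl : (∫ u in m..b, (u - m) ^ 2 * |g u|) = ∫ x in m..b, (b - x) ^ 2 * |f'' x| := by
    calc (∫ u in m..b, (u - m) ^ 2 * |g u|)
        = ∫ u in m..b, (fun x => (b - x) ^ 2 * |f'' x|) (m + b - u) := by
          apply intervalIntegral.integral_congr
          intro u _
          show (u - m) ^ 2 * |f'' (m + b - u)| = (b - (m + b - u)) ^ 2 * |f'' (m + b - u)|
          have : b - (m + b - u) = u - m := by ring
          rw [this]
      _ = ∫ x in (m + b) - b..(m + b) - m, (b - x) ^ 2 * |f'' x| :=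
          intervalIntegral.integral_comp_sub_left (a := m) (b := b)
            (fun x => (b - x) ^ 2 * |f'' x|) (m + b)
      _ = ∫ x in m..b, (b - x) ^ 2 * |f'' x| := by norm_num
  rw [hrefl] at hkey2
  -- absolute value bounds for the two integrals
  have habs1 : |∫ x in a..m, (x - a) ^ 2 / 2 * f'' x| ≤
      1 / 2 * ∫ x in a..m, (x - a) ^ 2 * |f'' x| := by
    refine (intervalIntegral.abs_integral_le_integral_abs ham.le).trans_eq ?_
    rw [← intervalIntegral.integral_const_mul]
    apply intervalIntegral.integral_congr
    intro x _
    show |(x - a) ^ 2 / 2 * f'' x| = 1 / 2 * ((x - a) ^ 2 * |f'' x|)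
    rw [abs_mul, abs_of_nonneg (by positivity : (0:ℝ) ≤ (x - a) ^ 2 / 2)]
    ring
  have habs2 : |∫ x in m..b, (x - b) ^ 2 / 2 * f'' x| ≤
      1 / 2 * ∫ x in m..b, (b - x) ^ 2 * |f'' x| := by
    refine (intervalIntegral.abs_integral_le_integral_abs hmb.le).trans_eq ?_
    rw [← intervalIntegral.integral_const_mul]
    apply intervalIntegral.integral_congr
    intro x _
    show |(x - b) ^ 2 / 2 * f'' x| = 1 / 2 * ((b - x) ^ 2 * |f'' x|)
    rw [abs_mul, abs_of_nonneg (by positivity : (0:ℝ) ≤ (x - b) ^ 2 / 2)]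
    ring
  -- assemble
  set C := (1 / (2 * p + 1)) ^ (1 / p) with hC
  set A1 := ((|f'' m| ^ q + |f'' a| ^ q) / 2) ^ (1 / q) with hA1
  set A2 := ((|f'' m| ^ q + |f'' b| ^ q) / 2) ^ (1 / q) with hA2
  rw [add_comm (|f'' a| ^ q)] at hkey1
  rw [add_comm (|f'' b| ^ q)] at hkey2
  rw [← hA1] at hkey1
  rw [← hA2] at hkey2
  have hI1 : |∫ x in a..m, (x - a) ^ 2 / 2 * f'' x| ≤ 1 / 2 * ((m - a) ^ 3 * C * A1) :=
    habs1.trans (by have := mul_le_mul_of_nonneg_left hkey1 (by norm_num : (0:ℝ) ≤ 1/2); linarith)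
  have hI2 : |∫ x in m..b, (x - b) ^ 2 / 2 * f'' x| ≤ 1 / 2 * ((b - m) ^ 3 * C * A2) :=
    habs2.trans (by have := mul_le_mul_of_nonneg_left hkey2 (by norm_num : (0:ℝ) ≤ 1/2); linarith)
  have hpos : (0:ℝ) < 1 / (b - a) := by positivity
  calc |f m - (1 / (b - a)) * ∫ u in a..b, f u|
      = (1 / (b - a)) * |(∫ x in a..m, (x - a) ^ 2 / 2 * f'' x)
          + ∫ x in m..b, (x - b) ^ 2 / 2 * f'' x| := by
        rw [hiden, abs_mul, abs_neg, abs_of_pos hpos]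
    _ ≤ (1 / (b - a)) * (|∫ x in a..m, (x - a) ^ 2 / 2 * f'' x|
          + |∫ x in m..b, (x - b) ^ 2 / 2 * f'' x|) := by
        exact mul_le_mul_of_nonneg_left (abs_add_le _ _) hpos.le
    _ ≤ (1 / (b - a)) * (1 / 2 * ((m - a) ^ 3 * C * A1) + 1 / 2 * ((b - m) ^ 3 * C * A2)) := by
        exact mul_le_mul_of_nonneg_left (add_le_add hI1 hI2) hpos.le
    _ = (b - a) ^ 2 / 16 * C * (A1 + A2) := by
        have e1 : m - a = (b - a) / 2 := by rw [hm]; ring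
        have e2 : b - m = (b - a) / 2 := by rw [hm]; ring
        rw [e1, e2]
        field_simp
        ring
end

section
/- Let f be twice differentiable on an open interval containing [a, mb] with f'' ∈ L¹, where 0 ≤ a < mb, m ∈ (0,1], α ∈ [0,1], and |f''|^q is (α,m)-convex on [a,b] for some q > 1, p = q/(q−1). Then |f((a+mb)/2) − (1/(mb−a))∫ₐ^{mb} f(u) du| ≤ ((mb−a)²/16)·(1/(2p+1))^{1/p}·{ [(|f''((a+mb)/2)|^q + αm|f''(a/m)|^q)/(α+1)]^{1/q} + [(|f''((a+mb)/2)|^q + αm|f''(b)|^q)/(α+1)]^{1/q} }. -/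
open MeasureTheory intervalIntegral Set

lemma holder_key (G : ℝ → ℝ) (u v A B m α q p : ℝ)
    (huv : u < v) (hm0 : 0 < m) (hα0 : 0 ≤ α)
    (hq : 1 < q) (hpq : p = q / (q - 1))
    (hA : 0 ≤ A) (hB : 0 ≤ B)
    (hGint : IntervalIntegrable G MeasureTheory.volume u v)
    (hbound : ∀ s ∈ Set.Icc u v, |G s| ^ q ≤
      ((s - u) / (v - u)) ^ α * A + m * (1 - ((s - u) / (v - u)) ^ α) * B) :
    |∫ s in u..v, (s - u) ^ 2 / 2 * G s| ≤
      (v - u) ^ 3 / 2 * (1 / (2 * p + 1)) ^ (1 / p) * ((A + α * m * B) / (α + 1)) ^ (1 / q) := by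
  have hcq : q.HolderConjugate p := hpq ▸ Real.HolderConjugate.conjExponent hq
  have hcp : p.HolderConjugate q := hcq.symm
  set h := v - u with hh_def
  have hh : 0 < h := sub_pos.2 huv
  have hq0 : (0:ℝ) < q := hcq.pos
  have hp0 : (0:ℝ) < p := hcp.pos
  have ht01 : ∀ s ∈ Icc u v, ((s - u) / h) ∈ Icc (0:ℝ) 1 := by
    intro s hs
    constructor
    · exact div_nonneg (sub_nonneg.2 hs.1) hh.le
    · rw [div_le_one hh]; exact sub_le_sub_right hs.2 u
  have htα : ∀ s ∈ Icc u v, ((s - u) / h) ^ α ∈ Icc (0:ℝ) 1 := by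
    intro s hs
    obtain ⟨h0, h1⟩ := ht01 s hs
    exact ⟨Real.rpow_nonneg h0 α, Real.rpow_le_one h0 h1 hα0⟩
  have hcrude : ∀ s ∈ Icc u v, |G s| ^ q ≤ A + m * B := by
    intro s hs
    refine (hbound s hs).trans ?_
    obtain ⟨h0, h1⟩ := htα s hs
    nlinarith [mul_nonneg hA (sub_nonneg.2 h1), mul_nonneg (mul_nonneg hm0.le h0) hB]
  set μr := MeasureTheory.volume.restrict (Ioc u v) with hμr
  haveI : IsFiniteMeasure μr := by
    constructor
    rw [hμr, Measure.restrict_apply_univ, Real.volume_Ioc]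
    exact ENNReal.ofReal_lt_top
  have hGmeas : AEStronglyMeasurable G μr := hGint.1.aestronglyMeasurable
  have habs : AEStronglyMeasurable (fun s => |G s|) μr := by
    simpa [Real.norm_eq_abs] using hGmeas.norm
  -- Memℒp for |G|
  have hGbd : ∀ s ∈ Icc u v, |G s| ≤ (A + m * B) ^ (1/q) := by
    intro s hs
    have h1 := Real.rpow_le_rpow (Real.rpow_nonneg (abs_nonneg _) q) (hcrude s hs)
      (by positivity : (0:ℝ) ≤ 1/q)
    rwa [one_div, Real.rpow_rpow_inv (abs_nonneg _) hq0.ne', ← one_div] at h1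
  have hg_mem : MemLp (fun s => |G s|) (ENNReal.ofReal q) μr := by
    refine MemLp.of_bound habs ((A + m * B) ^ (1/q)) ?_
    filter_upwards [ae_restrict_mem measurableSet_Ioc] with s hs
    rw [Real.norm_eq_abs, abs_abs]
    exact hGbd s ⟨hs.1.le, hs.2⟩
  have hwcont : Continuous (fun s : ℝ => (s - u) ^ 2 / 2) := by continuity
  have hw_mem : MemLp (fun s : ℝ => (s - u) ^ 2 / 2) (ENNReal.ofReal p) μr := by
    refine MemLp.of_bound hwcont.aestronglyMeasurable (h ^ 2 / 2) ?_
    filter_upwards [ae_restrict_mem measurableSet_Ioc] with s hs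
    rw [Real.norm_eq_abs, abs_of_nonneg (by positivity)]
    have h1 : s - u ≤ h := sub_le_sub_right hs.2 u
    have h2 : 0 ≤ s - u := sub_nonneg.2 hs.1.le
    nlinarith
  have holder := MeasureTheory.integral_mul_le_Lp_mul_Lq_of_nonneg hcp
    (Filter.Eventually.of_forall (fun s => by positivity : ∀ s : ℝ, (0:ℝ) ≤ (s - u) ^ 2 / 2))
    (Filter.Eventually.of_forall (fun s => abs_nonneg (G s))) hw_mem hg_mem
  -- value of the weight integral
  have hWval : (∫ s, ((s - u) ^ 2 / 2) ^ p ∂μr) = h ^ (2*p+1) / (2 ^ p * (2*p+1)) := by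
    rw [hμr, ← intervalIntegral.integral_of_le huv.le]
    have e : ∀ s ∈ uIcc u v, ((s - u) ^ 2 / 2) ^ p = (fun x : ℝ => x ^ (2*p) / 2 ^ p) (s - u) := by
      intro s hs
      rw [uIcc_of_le huv.le] at hs
      have h2 : (0:ℝ) ≤ s - u := sub_nonneg.2 hs.1
      rw [Real.div_rpow (by positivity) (by norm_num)]
      congr 1
      rw [← Real.rpow_natCast (s - u) 2, ← Real.rpow_mul h2]
      norm_num
    rw [intervalIntegral.integral_congr e,
      intervalIntegral.integral_comp_sub_right (fun x : ℝ => x ^ (2*p) / 2 ^ p) u]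
    have h1 : v - u = h := rfl
    rw [sub_self, h1, intervalIntegral.integral_div,
      integral_rpow (Or.inl (by linarith : (-1:ℝ) < 2*p)),
      Real.zero_rpow (by positivity : 2*p+1 ≠ 0)]
    rw [sub_zero, div_div]; congr 1; ring
  -- integrability of |G|^q
  have hGq_int : Integrable (fun s => |G s| ^ q) μr := by
    have h2 := hg_mem.integrable_norm_rpow (by simpa using hq0) (by simp)
    refine h2.congr (Filter.Eventually.of_forall fun s => ?_)
    simp [ENNReal.toReal_ofReal hq0.le, Real.norm_eq_abs, abs_abs]
  have hφ_int : IntervalIntegrable (fun s : ℝ => ((s - u) / h) ^ α) MeasureTheory.volume u v := by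
    have base : IntervalIntegrable (fun x : ℝ => x ^ α) MeasureTheory.volume 0 1 :=
      intervalIntegral.intervalIntegrable_rpow' (by linarith)
    have s1 := base.comp_mul_right (c := h⁻¹)
    rw [show (0:ℝ) / h⁻¹ = 0 by simp, show (1:ℝ) / h⁻¹ = h by field_simp] at s1
    have s2 := s1.comp_sub_right u
    rw [zero_add, show h + u = v by rw [hh_def]; ring] at s2
    simpa [div_eq_mul_inv] using s2
  have hdecomp : (fun s : ℝ => ((s - u) / h) ^ α * A + m * (1 - ((s - u) / h) ^ α) * B)
      = fun s : ℝ => (A - m * B) * ((s - u) / h) ^ α + m * B := by funext s; ring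
  have hψ_int : IntervalIntegrable
      (fun s : ℝ => ((s - u) / h) ^ α * A + m * (1 - ((s - u) / h) ^ α) * B)
      MeasureTheory.volume u v := by
    rw [hdecomp]
    exact (hφ_int.const_mul _).add intervalIntegrable_const
  have hφ_val : (∫ s in u..v, ((s - u) / h) ^ α) = h / (α + 1) := by
    rw [show (fun s : ℝ => ((s - u)/h) ^ α)
        = fun s : ℝ => ((fun x : ℝ => (x / h) ^ α) (s - u)) from rfl,
      intervalIntegral.integral_comp_sub_right (fun x : ℝ => (x / h) ^ α) u, sub_self,
      show v - u = h from rfl,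
      intervalIntegral.integral_comp_div (fun x : ℝ => x ^ α) hh.ne', zero_div, div_self hh.ne',
      integral_rpow (Or.inl (by linarith : (-1:ℝ) < α)), Real.one_rpow,
      Real.zero_rpow (by positivity : α + 1 ≠ 0), smul_eq_mul]
    ring
  have hQ_nonneg : 0 ≤ ∫ s, |G s| ^ q ∂μr :=
    integral_nonneg fun s => Real.rpow_nonneg (abs_nonneg _) q
  have hQ_le : (∫ s, |G s| ^ q ∂μr) ≤ h * ((A + α * m * B) / (α + 1)) := by
    have mono := setIntegral_mono_on hGq_int hψ_int.1 measurableSet_Ioc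
      (fun s hs => hbound s ⟨hs.1.le, hs.2⟩)
    refine le_trans mono (le_of_eq ?_)
    rw [← intervalIntegral.integral_of_le huv.le, hdecomp,
      intervalIntegral.integral_add (hφ_int.const_mul _) intervalIntegrable_const,
      intervalIntegral.integral_const_mul, hφ_val, intervalIntegral.integral_const,
      smul_eq_mul, show v - u = h from rfl]
    field_simp
    ring
  have hK : (0:ℝ) ≤ (A + α * m * B) / (α + 1) := by positivity
  have step0 : |∫ s in u..v, (s - u) ^ 2 / 2 * G s| ≤ ∫ s, (s - u) ^ 2 / 2 * |G s| ∂μr := by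
    refine (intervalIntegral.abs_integral_le_integral_abs huv.le).trans_eq ?_
    have e : (∫ s in u..v, |(s - u) ^ 2 / 2 * G s|) = ∫ s in u..v, (s - u) ^ 2 / 2 * |G s| :=
      intervalIntegral.integral_congr fun s _ => by
        rw [abs_mul, abs_of_nonneg (by positivity : (0:ℝ) ≤ (s - u) ^ 2 / 2)]
    rw [e, intervalIntegral.integral_of_le huv.le]
  have hpow_le : (∫ s, |G s| ^ q ∂μr) ^ (1/q)
      ≤ (h * ((A + α * m * B) / (α + 1))) ^ (1/q) :=
    Real.rpow_le_rpow hQ_nonneg hQ_le (by positivity)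
  have hW_nonneg : 0 ≤ (∫ s, ((s - u) ^ 2 / 2) ^ p ∂μr) ^ (1/p) := by
    rw [hWval]; positivity
  calc |∫ s in u..v, (s - u) ^ 2 / 2 * G s|
      ≤ ∫ s, (s - u) ^ 2 / 2 * |G s| ∂μr := step0
    _ ≤ (∫ s, ((s - u) ^ 2 / 2) ^ p ∂μr) ^ (1/p) * (∫ s, |G s| ^ q ∂μr) ^ (1/q) := holder
    _ ≤ (∫ s, ((s - u) ^ 2 / 2) ^ p ∂μr) ^ (1/p)
          * (h * ((A + α * m * B) / (α + 1))) ^ (1/q) :=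
        mul_le_mul_of_nonneg_left hpow_le hW_nonneg
    _ = h ^ 3 / 2 * (1/(2*p+1)) ^ (1/p) * ((A + α * m * B) / (α + 1)) ^ (1/q) := by
        rw [hWval]
        have hC : (0:ℝ) < (2*p+1) ^ (1/p) := Real.rpow_pos_of_pos (by positivity) _
        have e1 : (h ^ (2*p+1) / (2 ^ p * (2*p+1))) ^ (1/p)
            = h ^ 2 * h ^ (1/p) / (2 * (2*p+1) ^ (1/p)) := by
          have c1 : (2*p+1)*(1/p) = 2 + 1/p := by field_simp
          rw [Real.div_rpow (by positivity) (by positivity),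
              Real.mul_rpow (by positivity) (by positivity),
              ← Real.rpow_mul hh.le, c1, Real.rpow_add hh,
              ← Real.rpow_mul (by norm_num : (0:ℝ) ≤ 2), mul_one_div_cancel hp0.ne',
              Real.rpow_one]
          norm_num [show ((2:ℝ):ℝ) = ((2:ℕ):ℝ) by norm_num]
        have e2 : (h * ((A + α * m * B) / (α + 1))) ^ (1/q)
            = h ^ (1/q) * ((A + α * m * B) / (α + 1)) ^ (1/q) := Real.mul_rpow hh.le hK
        have e3 : h ^ (1/p) * h ^ (1/q) = h := by
          rw [← Real.rpow_add hh]
          rw [show 1/p + 1/q = 1 by rw [one_div, one_div]; exact hcp.inv_add_inv_eq_one,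
            Real.rpow_one]
        have e0 : (1/(2*p+1) : ℝ) ^ (1/p) = 1 / (2*p+1) ^ (1/p) := by
          rw [Real.div_rpow zero_le_one (by positivity), Real.one_rpow]
        rw [e1, e2, e0,
          show h ^ 2 * h ^ (1/p) / (2 * (2*p+1) ^ (1/p))
              * (h ^ (1/q) * ((A + α * m * B) / (α + 1)) ^ (1/q))
            = (h ^ (1/p) * h ^ (1/q)) * (h ^ 2 * ((A + α * m * B) / (α + 1)) ^ (1/q))
              / (2 * (2*p+1) ^ (1/p)) from by ring, e3]
        ring

lemma midpoint_identity (f f' f'' : ℝ → ℝ) (a c : ℝ) (hac : a < c)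
    (hf' : ∀ u ∈ Set.Icc a c, HasDerivAt f (f' u) u)
    (hf'' : ∀ u ∈ Set.Icc a c, HasDerivAt f' (f'' u) u)
    (hint : IntervalIntegrable f'' MeasureTheory.volume a c) :
    (∫ s in a..((a+c)/2), (s - a) ^ 2 / 2 * f'' s)
      + (∫ s in ((a+c)/2)..c, (c - s) ^ 2 / 2 * f'' s)
    = - (c - a) * f ((a+c)/2) + ∫ u in a..c, f u := by
  set M := (a+c)/2 with hM
  have haM : a ≤ M := by rw [hM]; linarith
  have hMc : M ≤ c := by rw [hM]; linarith
  have hsub1 : Set.uIcc a M ⊆ Set.uIcc a c := by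
    rw [uIcc_of_le haM, uIcc_of_le hac.le]; exact Icc_subset_Icc le_rfl hMc
  have hsub2 : Set.uIcc M c ⊆ Set.uIcc a c := by
    rw [uIcc_of_le hMc, uIcc_of_le hac.le]; exact Icc_subset_Icc haM le_rfl
  have hIcc1 : Set.uIcc a M ⊆ Set.Icc a c := by rwa [uIcc_of_le hac.le] at hsub1
  have hIcc2 : Set.uIcc M c ⊆ Set.Icc a c := by rwa [uIcc_of_le hac.le] at hsub2
  have hint1 : IntervalIntegrable f'' MeasureTheory.volume a M := hint.mono_set hsub1
  have hint2 : IntervalIntegrable f'' MeasureTheory.volume M c := hint.mono_set hsub2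
  have hf'c1 : ContinuousOn f' (Set.uIcc a M) := fun x hx =>
    ((hf'' x (hIcc1 hx)).continuousAt).continuousWithinAt
  have hf'c2 : ContinuousOn f' (Set.uIcc M c) := fun x hx =>
    ((hf'' x (hIcc2 hx)).continuousAt).continuousWithinAt
  have hf'int1 : IntervalIntegrable f' MeasureTheory.volume a M :=
    hf'c1.intervalIntegrable
  have hf'int2 : IntervalIntegrable f' MeasureTheory.volume M c :=
    hf'c2.intervalIntegrable
  have hfint1 : IntervalIntegrable f MeasureTheory.volume a M :=
    (ContinuousOn.intervalIntegrable (fun x hx =>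
      ((hf' x (hIcc1 hx)).continuousAt).continuousWithinAt))
  have hfint2 : IntervalIntegrable f MeasureTheory.volume M c :=
    (ContinuousOn.intervalIntegrable (fun x hx =>
      ((hf' x (hIcc2 hx)).continuousAt).continuousWithinAt))
  -- first IBP on [a, M]
  have ibp1 : (∫ s in a..M, (s - a) ^ 2 / 2 * f'' s)
      = (M - a) ^ 2 / 2 * f' M - ∫ s in a..M, (s - a) * f' s := by
    have h := intervalIntegral.integral_mul_deriv_eq_deriv_mul
      (u := fun s => (s - a) ^ 2 / 2) (u' := fun s => s - a) (v := f') (v' := f'')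
      (fun x _ => by
        simpa using (((hasDerivAt_id x).sub_const a).pow 2).div_const 2)
      (fun x hx => hf'' x (hIcc1 hx))
      (ContinuousOn.intervalIntegrable (by fun_prop)) hint1
    rw [h]; simp
  have ibp1' : (∫ s in a..M, (s - a) * f' s)
      = (M - a) * f M - ∫ s in a..M, f s := by
    have h := intervalIntegral.integral_mul_deriv_eq_deriv_mul
      (u := fun s => s - a) (u' := fun _ => (1:ℝ)) (v := f) (v' := f')
      (fun x _ => (hasDerivAt_id x).sub_const a)
      (fun x hx => hf' x (hIcc1 hx))
      intervalIntegrable_const hf'int1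
    rw [h]; simp
  -- second IBP on [M, c]
  have ibp2 : (∫ s in M..c, (c - s) ^ 2 / 2 * f'' s)
      = - ((c - M) ^ 2 / 2 * f' M) - ∫ s in M..c, -(c - s) * f' s := by
    have h := intervalIntegral.integral_mul_deriv_eq_deriv_mul
      (u := fun s => (c - s) ^ 2 / 2) (u' := fun s => -(c - s)) (v := f') (v' := f'')
      (fun x _ => by
        have : HasDerivAt (fun s : ℝ => (c - s) ^ 2 / 2) ((2 : ℕ) * (c - x) ^ (2-1) * (-1) / 2) x :=
          (((hasDerivAt_id x).const_sub c).pow 2).div_const 2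
        simpa using this.congr_deriv (by ring)
      )
      (fun x hx => hf'' x (hIcc2 hx))
      (ContinuousOn.intervalIntegrable (by fun_prop)) hint2
    rw [h]; simp
  have ibp2' : (∫ s in M..c, -(c - s) * f' s)
      = (c - M) * f M - ∫ s in M..c, f s := by
    have h := intervalIntegral.integral_mul_deriv_eq_deriv_mul
      (u := fun s => -(c - s)) (u' := fun _ => (1:ℝ)) (v := f) (v' := f')
      (fun x _ => ((hasDerivAt_id x).const_sub c).neg.congr_deriv (by simp))
      (fun x hx => hf' x (hIcc2 hx))
      intervalIntegrable_const hf'int2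
    rw [h]; simp; ring
  have hsplit : (∫ s in a..M, f s) + (∫ s in M..c, f s) = ∫ u in a..c, f u :=
    intervalIntegral.integral_add_adjacent_intervals hfint1 hfint2
  have hMa : M - a = (c - a)/2 := by rw [hM]; ring
  have hcM : c - M = (c - a)/2 := by rw [hM]; ring
  rw [ibp1, ibp1', ibp2, ibp2', hMa, hcM, ← hsplit]
  ring

set_option linter.unusedVariables false in
theorem stmt_19 (f f' f'' : ℝ → ℝ) (a b m α q p : ℝ)
    (hm0 : 0 < m) (hm1 : m ≤ 1) (ha : 0 ≤ a) (hab : a < m * b)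
    (hα0 : 0 ≤ α) (hα1 : α ≤ 1) (hq : 1 < q) (hpq : p = q / (q - 1))
    (hf' : ∀ u ∈ Set.Icc a (m * b), HasDerivAt f (f' u) u)
    (hf'' : ∀ u ∈ Set.Icc a (m * b), HasDerivAt f' (f'' u) u)
    (hint : IntervalIntegrable f'' MeasureTheory.volume a (m * b))
    (hconv : ∀ x ∈ Set.Icc (0:ℝ) b, ∀ y ∈ Set.Icc (0:ℝ) b, ∀ t ∈ Set.Icc (0:ℝ) 1,
      |f'' (t * x + m * (1 - t) * y)| ^ q ≤
        t ^ α * |f'' x| ^ q + m * (1 - t ^ α) * |f'' y| ^ q) :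
    |f ((a + m * b) / 2) - (1 / (m * b - a)) * ∫ u in a..(m * b), f u| ≤
      (m * b - a) ^ 2 / 16 * (1 / (2 * p + 1)) ^ (1 / p) *
        (((|f'' ((a + m * b) / 2)| ^ q + α * m * |f'' (a / m)| ^ q) / (α + 1)) ^ (1 / q)
          + ((|f'' ((a + m * b) / 2)| ^ q + α * m * |f'' b| ^ q) / (α + 1)) ^ (1 / q)) := by
  set c := m * b with hc
  set M := (a + c) / 2 with hMd
  have hca : 0 < c - a := sub_pos.2 hab
  have hc0 : 0 < c := lt_of_le_of_lt ha hab
  have hb0 : 0 < b := by nlinarith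
  have hcb : c ≤ b := by rw [hc]; nlinarith
  have haM : a < M := by rw [hMd]; linarith
  have hMc : M < c := by rw [hMd]; linarith
  have hMa : (0:ℝ) < M - a := sub_pos.2 haM
  have hMmem : M ∈ Set.Icc (0:ℝ) b := ⟨by rw [hMd]; linarith, by rw [hMd]; linarith⟩
  have hamem : a / m ∈ Set.Icc (0:ℝ) b :=
    ⟨div_nonneg ha hm0.le, (div_le_iff₀ hm0).2 (by nlinarith)⟩
  have hbmem : b ∈ Set.Icc (0:ℝ) b := ⟨hb0.le, le_rfl⟩
  have hint1 : IntervalIntegrable f'' MeasureTheory.volume a M :=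
    hint.mono_set (by
      rw [uIcc_of_le haM.le, uIcc_of_le hab.le]
      exact Icc_subset_Icc le_rfl hMc.le)
  have hint2 : IntervalIntegrable f'' MeasureTheory.volume M c :=
    hint.mono_set (by
      rw [uIcc_of_le hMc.le, uIcc_of_le hab.le]
      exact Icc_subset_Icc haM.le le_rfl)
  have hint2' : IntervalIntegrable (fun s => f'' (a + c - s)) MeasureTheory.volume a M := by
    have h0 := hint2.comp_sub_left (a + c)
    rw [show a + c - M = M by rw [hMd]; ring, show a + c - c = a by ring] at h0
    exact h0.symm
  -- bound for the left half
  have hb1 : ∀ s ∈ Set.Icc a M, |f'' s| ^ q ≤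
      ((s - a) / (M - a)) ^ α * |f'' M| ^ q
        + m * (1 - ((s - a) / (M - a)) ^ α) * |f'' (a / m)| ^ q := by
    intro s hs
    have ht : (s - a) / (M - a) ∈ Set.Icc (0:ℝ) 1 :=
      ⟨div_nonneg (sub_nonneg.2 hs.1) hMa.le, (div_le_one hMa).2 (by linarith [hs.2])⟩
    have harg : (s - a) / (M - a) * M + m * (1 - (s - a) / (M - a)) * (a / m) = s := by
      field_simp
      ring
    have h1 := hconv M hMmem (a / m) hamem _ ht
    rwa [harg] at h1
  -- bound for the reflected right half
  have hb2 : ∀ s ∈ Set.Icc a M, |f'' (a + c - s)| ^ q ≤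
      ((s - a) / (M - a)) ^ α * |f'' M| ^ q
        + m * (1 - ((s - a) / (M - a)) ^ α) * |f'' b| ^ q := by
    intro s hs
    have ht : (s - a) / (M - a) ∈ Set.Icc (0:ℝ) 1 :=
      ⟨div_nonneg (sub_nonneg.2 hs.1) hMa.le, (div_le_one hMa).2 (by linarith [hs.2])⟩
    have harg : (s - a) / (M - a) * M + m * (1 - (s - a) / (M - a)) * b = a + c - s := by
      have hne : m * b - a ≠ 0 := ne_of_gt (by rw [← hc]; linarith)
      rw [hMd, hc, show (a + m * b) / 2 - a = (m * b - a) / 2 from by ring]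
      field_simp
      ring
    have h1 := hconv M hMmem b hbmem _ ht
    rwa [harg] at h1
  have h1 := holder_key f'' a M (|f'' M| ^ q) (|f'' (a / m)| ^ q) m α q p haM hm0 hα0 hq hpq
    (by positivity) (by positivity) hint1 hb1
  have h2 := holder_key (fun s => f'' (a + c - s)) a M (|f'' M| ^ q) (|f'' b| ^ q) m α q p
    haM hm0 hα0 hq hpq (by positivity) (by positivity) hint2' hb2
  -- reflection identity
  have hrefl : (∫ s in M..c, (c - s) ^ 2 / 2 * f'' s)
      = ∫ s in a..M, (s - a) ^ 2 / 2 * f'' (a + c - s) := by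
    have h0 := intervalIntegral.integral_comp_sub_left
      (a := a) (b := M) (fun σ => (c - σ) ^ 2 / 2 * f'' σ) (a + c)
    rw [show a + c - M = M by rw [hMd]; ring, show a + c - a = c by ring] at h0
    rw [← h0]
    refine intervalIntegral.integral_congr fun s _ => ?_
    have e : c - (a + c - s) = s - a := by ring
    simp only [e]
  have hid := midpoint_identity f f' f'' a c hab hf' hf'' hint
  rw [← hMd] at hid
  have hiden : f M - (1 / (c - a)) * ∫ u in a..c, f u
      = -(1 / (c - a)) * ((∫ s in a..M, (s - a) ^ 2 / 2 * f'' s)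
          + (∫ s in M..c, (c - s) ^ 2 / 2 * f'' s)) := by
    rw [hid]
    field_simp
    ring
  set C := (1 / (2 * p + 1)) ^ (1 / p) with hC
  have hC0 : 0 ≤ C := by
    rw [hC]
    have hp0 : (0:ℝ) < p := by
      rw [hpq]; exact div_pos (by linarith) (by linarith)
    positivity
  set K1 := ((|f'' M| ^ q + α * m * |f'' (a / m)| ^ q) / (α + 1)) ^ (1 / q) with hK1
  set K2 := ((|f'' M| ^ q + α * m * |f'' b| ^ q) / (α + 1)) ^ (1 / q) with hK2
  have h2' : |∫ s in M..c, (c - s) ^ 2 / 2 * f'' s| ≤ (M - a) ^ 3 / 2 * C * K2 := by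
    rw [hrefl]; exact h2
  calc |f M - (1 / (c - a)) * ∫ u in a..c, f u|
      = 1 / (c - a) * |(∫ s in a..M, (s - a) ^ 2 / 2 * f'' s)
          + (∫ s in M..c, (c - s) ^ 2 / 2 * f'' s)| := by
        rw [hiden, abs_mul, abs_neg, abs_of_nonneg (by positivity : (0:ℝ) ≤ 1 / (c - a))]
    _ ≤ 1 / (c - a) * (|∫ s in a..M, (s - a) ^ 2 / 2 * f'' s|
          + |∫ s in M..c, (c - s) ^ 2 / 2 * f'' s|) := by
        gcongr
        exact abs_add_le _ _
    _ ≤ 1 / (c - a) * ((M - a) ^ 3 / 2 * C * K1 + (M - a) ^ 3 / 2 * C * K2) := by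
        gcongr
    _ = (c - a) ^ 2 / 16 * C * (K1 + K2) := by
        rw [hMd]
        field_simp
        ring
end
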